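/- arXiv:1705.00144 — 6 statements merged into one kernel-verified Lean document; each statement's English description precedes it below -/
import Mathlib

section
/- For every AIET f of [0,1), the sequence n ↦ #BP(f^n) of cardinalities of break point sets of iterates either is bounded, or grows linearly: there are constants C>0 and N₀ such that #BP(f^n) ≥ C·n for all n ≥ N₀. -/
open Set Filter Function MeasureTheory Topology

noncomputable section

/-- Right derivative of `f` at `x`. -/
def rightD (f : ℝ → ℝ) (x : ℝ) : ℝ := derivWithin f (Set.Ici x) x

/-- Left derivative of `f` at `x`. -/
def leftD (f : ℝ → ℝ) (x : ℝ) : ℝ := derivWithin f (Set.Iic x) x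

/-- Break points of `f` on `[0,1)`: the point `0` together with the
discontinuities of `f` and of its (right) derivative in `(0,1)`. -/
def BP (f : ℝ → ℝ) : Set ℝ :=
  {0} ∪ {x ∈ Set.Ioo (0:ℝ) 1 |
    Function.leftLim f x ≠ f x ∨ Function.leftLim (rightD f) x ≠ rightD f x}

/-- An affine interval exchange transformation of `[0,1)`, modelled as a map of `ℝ`
that is the identity outside `[0,1)`, a bijection of `[0,1)` onto itself, and affine
with positive slope on the pieces of some finite subdivision `0 = a 0 < ... < a p = 1`. -/
structure IsAIET (f : ℝ → ℝ) : Prop where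
  bijOn : Set.BijOn f (Set.Ico 0 1) (Set.Ico 0 1)
  id_outside : ∀ x, x ∉ Set.Ico (0:ℝ) 1 → f x = x
  piecewise : ∃ (p : ℕ) (a : ℕ → ℝ), 0 < p ∧ a 0 = 0 ∧ a p = 1 ∧
    (∀ i j, i < j → j ≤ p → a i < a j) ∧
    ∀ i < p, ∃ lam beta : ℝ, 0 < lam ∧
      ∀ x ∈ Set.Ico (a i) (a (i+1)), f x = lam * x + beta

/-- The jump of slopes of `f` at `x` : `σ_f(x) = D₊f(x)/D₋f(x)` for `x ∈ (0,1)`, and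
`σ_f(0) = D₊f(0)/D₋f(1)`. -/
def jump (f : ℝ → ℝ) (x : ℝ) : ℝ :=
  if x = 0 then rightD f 0 / leftD f 1 else rightD f x / leftD f x

/-- The jump of values of `f` at `x` : `Δ_f(x) = f₊(x) - f₋(x)` for `x ∈ (0,1)`
(here `f₊(x) = f(x)` since AIETs are right-continuous), and `Δ_f(0) = f₊(0) - f₋(1)`. -/
def Δjump (f : ℝ → ℝ) (x : ℝ) : ℝ :=
  if x = 0 then f 0 - Function.leftLim f 1 else f x - Function.leftLim f x

/-- A PL-homeomorphism of `[0,1)` : an AIET which, seen on the circle `[0,1]/(0=1)`,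
is a homeomorphism; equivalently at any interior discontinuity the value jumps from `1` to `0`. -/
def IsPLHomeo (f : ℝ → ℝ) : Prop :=
  IsAIET f ∧ ∀ x ∈ Set.Ioo (0:ℝ) 1,
    Function.leftLim f x ≠ f x → f x = 0 ∧ Function.leftLim f x = 1

/-- Word length of `g` with respect to the finite set `S` (letters in `S ∪ S⁻¹`). -/
def wordLength {G : Type*} [Group G] (S : Finset G) (g : G) : ℕ :=
  sInf {n : ℕ | ∃ w : Fin n → G, (∀ i, w i ∈ S ∨ (w i)⁻¹ ∈ S) ∧ (List.ofFn w).prod = g}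

/-- The restricted rotation of `I = [a,b)` by `δ` (the identity outside `I`). -/
def RR (a b δ : ℝ) (x : ℝ) : ℝ :=
  if x ∈ Set.Ico a (b - δ) then x + δ
  else if x ∈ Set.Ico (b - δ) b then x + δ - (b - a) else x

abbrev AffP : Type := {g : ℝ × ℝ // 0 < g.1}
namespace AffP
instance : Mul AffP := ⟨fun g h => ⟨(g.1.1 * h.1.1, g.1.1 * h.1.2 + g.1.2), mul_pos g.2 h.2⟩⟩
instance : One AffP := ⟨⟨(1, 0), one_pos⟩⟩
instance : Inv AffP := ⟨fun g => ⟨(g.1.1⁻¹, -(g.1.2 / g.1.1)), inv_pos.2 g.2⟩⟩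
lemma mul_def (g h : AffP) :
    g * h = ⟨(g.1.1 * h.1.1, g.1.1 * h.1.2 + g.1.2), mul_pos g.2 h.2⟩ := rfl
lemma one_def : (1 : AffP) = ⟨(1, 0), one_pos⟩ := rfl
lemma inv_def (g : AffP) : g⁻¹ = ⟨(g.1.1⁻¹, -(g.1.2 / g.1.1)), inv_pos.2 g.2⟩ := rfl
instance : Group AffP where
  mul_assoc g h k := by
    apply Subtype.ext; simp only [mul_def]; exact Prod.ext (by ring) (by ring)
  one_mul g := by apply Subtype.ext; simp [mul_def, one_def]
  mul_one g := by apply Subtype.ext; simp [mul_def, one_def]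
  inv_mul_cancel g := by
    have hg := g.2
    apply Subtype.ext; simp only [mul_def, inv_def, one_def]
    exact Prod.ext (by field_simp) (by field_simp; ring)
def aff (g : AffP) (x : ℝ) : ℝ := g.1.1 * x + g.1.2
lemma aff_mul (g h : AffP) (x : ℝ) : aff (g * h) x = aff g (aff h x) := by
  simp only [aff, mul_def]; ring
lemma aff_one (x : ℝ) : aff 1 x = x := by simp [aff, one_def]
lemma aff_lt (g : AffP) {x y : ℝ} (h : x < y) : aff g x < aff g y := by
  have := g.2; simp only [aff]; nlinarith
lemma aff_cont (g : AffP) : Continuous (aff g) := by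
  exact (continuous_const.mul continuous_id).add continuous_const
lemma eq_iff_of_aff (g h : AffP) (x : ℝ) :
    g = h ↔ (g.1.1 = h.1.1 ∧ aff g x = aff h x) := by
  constructor
  · rintro rfl; exact ⟨rfl, rfl⟩
  · rintro ⟨h1, h2⟩
    apply Subtype.ext; apply Prod.ext h1
    simp only [aff, h1] at h2; linarith
end AffP

open AffP

/-- `g` coincides with the affine map `u` on a right neighborhood of `x` (incl. `x`). -/
def RA (g : ℝ → ℝ) (x : ℝ) (u : AffP) : Prop := ∀ᶠ z in 𝓝[≥] x, g z = u.aff z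
/-- `g` coincides with the affine map `u` on a left neighborhood of `x` (excl. `x`). -/
def LA (g : ℝ → ℝ) (x : ℝ) (u : AffP) : Prop := ∀ᶠ z in 𝓝[<] x, g z = u.aff z

lemma RA.self {g : ℝ → ℝ} {x : ℝ} {u : AffP} (h : RA g x u) : g x = u.aff x :=
  h.self_of_nhdsWithin self_mem_Ici

lemma RA.comp {g h : ℝ → ℝ} {x : ℝ} {u v : AffP}
    (hg : RA g x u) (hh : RA h (u.aff x) v) : RA (fun z => h (g z)) x (v * u) := by
  have hgx : g x = u.aff x := hg.self
  have htd : Tendsto g (𝓝[≥] x) (𝓝[≥] (u.aff x)) := by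
    rw [tendsto_nhdsWithin_iff]
    constructor
    · exact Tendsto.congr' (by filter_upwards [hg] with z hz using hz.symm)
        (((u.aff_cont.tendsto x).comp (nhdsWithin_le_nhds)))
    · filter_upwards [hg, eventually_mem_nhdsWithin] with z hz hz'
      rw [hz]
      rcases eq_or_lt_of_le (mem_Ici.1 hz') with h' | h'
      · exact mem_Ici.2 (le_of_eq (congrArg u.aff h'))
      · exact le_of_lt (u.aff_lt h')
  have := htd.eventually hh
  filter_upwards [this, hg] with z h1 h2
  rw [h2] at h1 ⊢
  rw [h1, aff_mul]

lemma LA.comp {g h : ℝ → ℝ} {x : ℝ} {u v : AffP}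
    (hg : LA g x u) (hh : LA h (u.aff x) v) : LA (fun z => h (g z)) x (v * u) := by
  have htd : Tendsto g (𝓝[<] x) (𝓝[<] (u.aff x)) := by
    rw [tendsto_nhdsWithin_iff]
    constructor
    · exact Tendsto.congr' (by filter_upwards [hg] with z hz using hz.symm)
        (((u.aff_cont.tendsto x).comp (nhdsWithin_le_nhds)))
    · filter_upwards [hg, eventually_mem_nhdsWithin] with z hz hz'
      rw [hz]
      exact u.aff_lt hz'
  have := htd.eventually hh
  filter_upwards [this, hg] with z h1 h2
  rw [h2] at h1 ⊢
  rw [h1, aff_mul]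

lemma RA.rightD_eq {g : ℝ → ℝ} {x : ℝ} {u : AffP} (h : RA g x u) :
    rightD g x = u.1.1 := by
  have haff : HasDerivWithinAt (u.aff) u.1.1 (Set.Ici x) x := by
    have := (((hasDerivAt_id x).const_mul u.1.1).add_const u.1.2).hasDerivWithinAt (s := Set.Ici x)
    simp only [mul_one] at this
    exact this
  have : HasDerivWithinAt g u.1.1 (Set.Ici x) x := by
    apply haff.congr_of_eventuallyEq _ h.self
    filter_upwards [h] with z hz using hz
  exact this.derivWithin (uniqueDiffOn_Ici x x Set.self_mem_Ici)

lemma LA.leftLim_eq {g : ℝ → ℝ} {x : ℝ} {u : AffP} (h : LA g x u) :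
    Function.leftLim g x = u.aff x := by
  apply leftLim_eq_of_tendsto
  exact Tendsto.congr' (by filter_upwards [h] with z hz using hz.symm)
    ((u.aff_cont.tendsto x).comp nhdsWithin_le_nhds)

lemma LA.leftLim_rightD_eq {g : ℝ → ℝ} {x : ℝ} {u : AffP} (h : LA g x u) :
    Function.leftLim (rightD g) x = u.1.1 := by
  rcases mem_nhdsLT_iff_exists_Ioo_subset.1 h with ⟨l, hl, hsub⟩
  apply leftLim_eq_of_tendsto
  apply Tendsto.congr' _ tendsto_const_nhds
  have hIoo : Ioo l x ∈ 𝓝[<] x := Ioo_mem_nhdsLT_of_mem ⟨hl, le_refl x⟩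
  filter_upwards [hIoo] with y hy
  have hyRA : RA g y u := by
    have : Ico y x ∈ 𝓝[≥] y := Ico_mem_nhdsGE_of_mem ⟨le_refl y, hy.2⟩
    filter_upwards [this] with z hz
    exact hsub ⟨lt_of_lt_of_le hy.1 hz.1, hz.2⟩
  exact hyRA.rightD_eq.symm

/-- Membership in `BP` for interior points via germs. -/
lemma mem_BP_iff {g : ℝ → ℝ} {x : ℝ} {u v : AffP} (hx : x ∈ Set.Ioo (0:ℝ) 1)
    (hR : RA g x u) (hL : LA g x v) : x ∈ BP g ↔ v ≠ u := by
  have hx0 : x ≠ 0 := ne_of_gt hx.1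
  constructor
  · rintro (h | h) rfl
    · exact hx0 h
    · rcases h.2 with h' | h'
      · exact h' (by rw [hL.leftLim_eq, hR.self])
      · exact h' (by rw [hL.leftLim_rightD_eq, hR.rightD_eq])
  · intro hne
    right
    refine ⟨hx, ?_⟩
    by_contra hcon
    push_neg at hcon
    obtain ⟨h1, h2⟩ := hcon
    apply hne
    rw [AffP.eq_iff_of_aff v u x]
    constructor
    · rw [← hL.leftLim_rightD_eq, ← hR.rightD_eq]; exact h2
    · rw [← hL.leftLim_eq, ← hR.self]; exact h1

/-- All the data of an AIET bundled. -/
structure Pieces (f : ℝ → ℝ) where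
  p : ℕ
  a : ℕ → ℝ
  lam : ℕ → ℝ
  beta : ℕ → ℝ
  hbij : Set.BijOn f (Set.Ico 0 1) (Set.Ico 0 1)
  hid : ∀ x, x ∉ Set.Ico (0:ℝ) 1 → f x = x
  hp : 0 < p
  ha0 : a 0 = 0
  hap : a p = 1
  hmono : ∀ i j, i < j → j ≤ p → a i < a j
  hlam : ∀ i, i < p → 0 < lam i
  hfp : ∀ i, i < p → ∀ x ∈ Set.Ico (a i) (a (i+1)), f x = lam i * x + beta i

namespace Pieces

variable {f : ℝ → ℝ} (P : Pieces f)

lemma a_le_a {i j : ℕ} (hij : i ≤ j) (hj : j ≤ P.p) : P.a i ≤ P.a j := by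
  rcases eq_or_lt_of_le hij with h | h
  · exact le_of_eq (congrArg P.a h)
  · exact le_of_lt (P.hmono i j h hj)

lemma a_nonneg {i : ℕ} (hi : i ≤ P.p) : 0 ≤ P.a i := by
  have := P.a_le_a (Nat.zero_le i) hi
  rwa [P.ha0] at this

lemma a_le_one {i : ℕ} (hi : i ≤ P.p) : P.a i ≤ 1 := by
  have := P.a_le_a hi (le_refl P.p)
  rwa [P.hap] at this

lemma exists_piece_right {x : ℝ} (h0 : 0 ≤ x) (h1 : x < 1) :
    ∃ i, i < P.p ∧ P.a i ≤ x ∧ x < P.a (i+1) := by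
  classical
  set i := Nat.findGreatest (fun i => P.a i ≤ x) P.p with hi
  have hbase : P.a 0 ≤ x := by rw [P.ha0]; exact h0
  have hspec : P.a i ≤ x := by
    have := Nat.findGreatest_spec (P := fun i => P.a i ≤ x) (Nat.zero_le P.p) hbase
    rwa [← hi] at this
  have hile : i ≤ P.p := Nat.findGreatest_le _
  have hip : i < P.p := by
    rcases eq_or_lt_of_le hile with h | h
    · exfalso; rw [h, P.hap] at hspec; linarith
    · exact h
  refine ⟨i, hip, hspec, ?_⟩
  by_contra hcon
  push_neg at hcon
  exact Nat.findGreatest_is_greatest (Nat.lt_succ_self i) hip hcon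

lemma exists_piece_left {x : ℝ} (h0 : 0 < x) (h1 : x ≤ 1) :
    ∃ i, i < P.p ∧ P.a i < x ∧ x ≤ P.a (i+1) := by
  classical
  set i := Nat.findGreatest (fun i => P.a i < x) P.p with hi
  have hbase : P.a 0 < x := by rw [P.ha0]; exact h0
  have hspec : P.a i < x := by
    have := Nat.findGreatest_spec (P := fun i => P.a i < x) (Nat.zero_le P.p) hbase
    rwa [← hi] at this
  have hile : i ≤ P.p := Nat.findGreatest_le _
  have hip : i < P.p := by
    rcases eq_or_lt_of_le hile with h | h
    · exfalso; rw [h, P.hap] at hspec; linarith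
    · exact h
  refine ⟨i, hip, hspec, ?_⟩
  by_contra hcon
  push_neg at hcon
  exact Nat.findGreatest_is_greatest (Nat.lt_succ_self i) hip hcon

lemma right_unique {i j : ℕ} {x : ℝ} (hi : i < P.p) (hj : j < P.p)
    (h1 : P.a i ≤ x) (h2 : x < P.a (i+1)) (h3 : P.a j ≤ x) (h4 : x < P.a (j+1)) :
    i = j := by
  rcases lt_trichotomy i j with h | h | h
  · exfalso
    have : P.a (i+1) ≤ P.a j := P.a_le_a h (le_of_lt hj)
    linarith
  · exact h
  · exfalso
    have : P.a (j+1) ≤ P.a i := P.a_le_a h (le_of_lt hi)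
    linarith

lemma cross_unique {i j : ℕ} {x : ℝ} (hi : i < P.p) (hj : j < P.p)
    (hx : ∀ k, k ≤ P.p → x ≠ P.a k)
    (h1 : P.a i ≤ x) (h2 : x < P.a (i+1)) (h3 : P.a j < x) (h4 : x ≤ P.a (j+1)) :
    i = j := by
  rcases lt_trichotomy i j with h | h | h
  · exfalso
    have : P.a (i+1) ≤ P.a j := P.a_le_a h (le_of_lt hj)
    linarith
  · exact h
  · exfalso
    have : P.a (j+1) ≤ P.a i := P.a_le_a h (le_of_lt hi)
    have hxe : x = P.a i := le_antisymm (by linarith) h1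
    exact hx i (le_of_lt hi) hxe

/-- The right-germ of `f` at `y`. -/
def αg (y : ℝ) : AffP :=
  if h : ∃ i, i < P.p ∧ P.a i ≤ y ∧ y < P.a (i+1) then
    ⟨(P.lam h.choose, P.beta h.choose), P.hlam _ h.choose_spec.1⟩
  else 1

/-- The left-germ of `f` at `y`. -/
def βg (y : ℝ) : AffP :=
  if h : ∃ i, i < P.p ∧ P.a i < y ∧ y ≤ P.a (i+1) then
    ⟨(P.lam h.choose, P.beta h.choose), P.hlam _ h.choose_spec.1⟩
  else 1

/-- The left-limit dynamics. -/
def F (y : ℝ) : ℝ := (P.βg y).aff y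

lemma αg_piece {i : ℕ} {y : ℝ} (hi : i < P.p) (h1 : P.a i ≤ y) (h2 : y < P.a (i+1)) :
    P.αg y = ⟨(P.lam i, P.beta i), P.hlam i hi⟩ := by
  have h : ∃ i, i < P.p ∧ P.a i ≤ y ∧ y < P.a (i+1) := ⟨i, hi, h1, h2⟩
  rw [αg, dif_pos h]
  have hc := h.choose_spec
  have : h.choose = i := P.right_unique hc.1 hi hc.2.1 hc.2.2 h1 h2
  simp only [this]

lemma βg_piece {i : ℕ} {y : ℝ} (hi : i < P.p) (h1 : P.a i < y) (h2 : y ≤ P.a (i+1)) :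
    P.βg y = ⟨(P.lam i, P.beta i), P.hlam i hi⟩ := by
  have h : ∃ i, i < P.p ∧ P.a i < y ∧ y ≤ P.a (i+1) := ⟨i, hi, h1, h2⟩
  rw [βg, dif_pos h]
  have hc := h.choose_spec
  have : h.choose = i := by
    rcases lt_trichotomy h.choose i with hlt | he | hgt
    · exfalso
      have : P.a (h.choose + 1) ≤ P.a i := P.a_le_a hlt (le_of_lt hi)
      linarith [hc.2.1, hc.2.2]
    · exact he
    · exfalso
      have : P.a (i + 1) ≤ P.a h.choose := P.a_le_a hgt (le_of_lt hc.1)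
      linarith [hc.2.1, hc.2.2]
  simp only [this]

lemma notRight {y : ℝ} (h : ¬ ∃ i, i < P.p ∧ P.a i ≤ y ∧ y < P.a (i+1)) :
    y ∉ Set.Ico (0:ℝ) 1 := fun hy => h (P.exists_piece_right hy.1 hy.2)

lemma notLeft {y : ℝ} (h : ¬ ∃ i, i < P.p ∧ P.a i < y ∧ y ≤ P.a (i+1)) :
    y ∉ Set.Ioc (0:ℝ) 1 := fun hy => h (P.exists_piece_left hy.1 hy.2)

lemma αg_spec (y : ℝ) : RA f y (P.αg y) := by
  rw [αg]
  split_ifs with h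
  · obtain ⟨hc1, hc2, hc3⟩ := h.choose_spec
    have hmem : Set.Ico y (P.a (h.choose + 1)) ∈ 𝓝[≥] y :=
      Ico_mem_nhdsGE_of_mem ⟨le_refl y, hc3⟩
    filter_upwards [hmem] with z hz
    exact P.hfp _ hc1 z ⟨le_trans hc2 hz.1, hz.2⟩
  · have hy := P.notRight h
    rcases lt_or_ge y 0 with h0 | h0
    · have hmem : Set.Ico y (0:ℝ) ∈ 𝓝[≥] y := Ico_mem_nhdsGE_of_mem ⟨le_refl y, h0⟩
      filter_upwards [hmem] with z hz
      rw [P.hid z (fun hz' => absurd hz'.1 (not_le.2 hz.2)), aff_one]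
    · have h1 : (1:ℝ) ≤ y := by
        by_contra hc
        exact hy ⟨h0, not_le.1 hc⟩
      filter_upwards [eventually_mem_nhdsWithin] with z hz
      have : (1:ℝ) ≤ z := le_trans h1 hz
      rw [P.hid z (fun hz' => absurd hz'.2 (not_lt.2 this)), aff_one]

lemma βg_spec (y : ℝ) : LA f y (P.βg y) := by
  rw [βg]
  split_ifs with h
  · obtain ⟨hc1, hc2, hc3⟩ := h.choose_spec
    have hmem : Set.Ioo (P.a h.choose) y ∈ 𝓝[<] y := Ioo_mem_nhdsLT_of_mem ⟨hc2, le_refl y⟩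
    filter_upwards [hmem] with z hz
    exact P.hfp _ hc1 z ⟨le_of_lt hz.1, lt_of_lt_of_le hz.2 hc3⟩
  · have hy := P.notLeft h
    rcases le_or_gt y 0 with h0 | h0
    · have hmem : Set.Ioo (y-1) y ∈ 𝓝[<] y := Ioo_mem_nhdsLT_of_mem ⟨by linarith, le_refl y⟩
      filter_upwards [hmem] with z hz
      rw [P.hid z (fun hz' => absurd hz'.1 (not_le.2 (lt_of_lt_of_le hz.2 h0))), aff_one]
    · have h1 : (1:ℝ) < y := by
        by_contra hc
        exact hy ⟨h0, not_lt.1 hc⟩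
      have hmem : Set.Ioo (1:ℝ) y ∈ 𝓝[<] y := Ioo_mem_nhdsLT_of_mem ⟨h1, le_refl y⟩
      filter_upwards [hmem] with z hz
      rw [P.hid z (fun hz' => absurd hz'.2 (not_lt.2 (le_of_lt hz.1))), aff_one]

lemma aff_αg (y : ℝ) : (P.αg y).aff y = f y := by
  rw [αg]
  split_ifs with h
  · obtain ⟨hc1, hc2, hc3⟩ := h.choose_spec
    exact (P.hfp _ hc1 y ⟨hc2, hc3⟩).symm
  · rw [aff_one, P.hid y (P.notRight h)]

/-- The set of subdivision points (including both endpoints). -/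
def Astar : Set ℝ := P.a '' {i | i ≤ P.p}

/-- The set of subdivision points except `1`. -/
def Tset : Set ℝ := P.a '' {i | i < P.p}

lemma Astar_finite : P.Astar.Finite := (Set.finite_Iic P.p).image P.a

lemma Tset_finite : P.Tset.Finite := (Set.finite_Iio P.p).image P.a

lemma zero_mem_Tset : (0:ℝ) ∈ P.Tset := ⟨0, P.hp, P.ha0⟩

lemma Tset_subset_Astar : P.Tset ⊆ P.Astar := by
  rintro x ⟨i, hi, rfl⟩
  exact ⟨i, show i ≤ P.p from le_of_lt (show i < P.p from hi), rfl⟩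

lemma not_Astar_of_Ico {x : ℝ} (hx : x ∈ Set.Ico (0:ℝ) 1) (hT : x ∉ P.Tset) :
    x ∉ P.Astar := by
  rintro ⟨i, hi, rfl⟩
  have hi' : i ≤ P.p := hi
  rcases eq_or_lt_of_le hi' with h | h
  · rw [h, P.hap] at hx; exact absurd hx.2 (lt_irrefl 1)
  · exact hT ⟨i, h, rfl⟩

lemma αβ_eq {y : ℝ} (hy : y ∉ P.Astar) : P.βg y = P.αg y := by
  have hy' : ∀ k, k ≤ P.p → y ≠ P.a k := by
    intro k hk he
    exact hy ⟨k, hk, he.symm⟩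
  by_cases hIco : y ∈ Set.Ico (0:ℝ) 1
  · obtain ⟨i, hi, h1, h2⟩ := P.exists_piece_right hIco.1 hIco.2
    have h1' : P.a i < y := lt_of_le_of_ne h1 (fun he => hy' i (le_of_lt hi) he.symm)
    rw [P.αg_piece hi h1 h2, P.βg_piece hi h1' (le_of_lt h2)]
  · have h0 : ¬ (0 ≤ y ∧ y < 1) := fun hc => hIco ⟨hc.1, hc.2⟩
    have hne1 : y ≠ 1 := by
      intro he
      exact hy' P.p (le_refl _) (by rw [he, P.hap])
    have hcases : y < 0 ∨ 1 < y := by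
      rcases lt_or_ge y 0 with h | h
      · exact Or.inl h
      · rcases lt_trichotomy y 1 with h' | h' | h'
        · exact absurd ⟨h, h'⟩ h0
        · exact absurd h' hne1
        · exact Or.inr h'
    have hα : ¬ ∃ i, i < P.p ∧ P.a i ≤ y ∧ y < P.a (i+1) := by
      rintro ⟨i, hi, hh1, hh2⟩
      have := P.a_nonneg (le_of_lt hi)
      have := P.a_le_one (Nat.succ_le_of_lt hi)
      rcases hcases with h | h <;> linarith
    have hβ : ¬ ∃ i, i < P.p ∧ P.a i < y ∧ y ≤ P.a (i+1) := by
      rintro ⟨i, hi, hh1, hh2⟩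
      have := P.a_nonneg (le_of_lt hi)
      have := P.a_le_one (Nat.succ_le_of_lt hi)
      rcases hcases with h | h <;> linarith
    rw [αg, βg, dif_neg hα, dif_neg hβ]

lemma F_eq_f {y : ℝ} (hy : y ∉ P.Astar) : P.F y = f y := by
  rw [F, P.αβ_eq hy, P.aff_αg]

include P in
lemma fbij : Function.Bijective f := by
  constructor
  · intro x y hxy
    by_cases hx : x ∈ Set.Ico (0:ℝ) 1 <;> by_cases hy : y ∈ Set.Ico (0:ℝ) 1
    · exact P.hbij.injOn hx hy hxy
    · exfalso
      have h1 : f x ∈ Set.Ico (0:ℝ) 1 := P.hbij.mapsTo hx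
      rw [hxy, P.hid y hy] at h1
      exact hy h1
    · exfalso
      have h1 : f y ∈ Set.Ico (0:ℝ) 1 := P.hbij.mapsTo hy
      rw [← hxy, P.hid x hx] at h1
      exact hx h1
    · rw [P.hid x hx, P.hid y hy] at hxy
      exact hxy
  · intro y
    by_cases hy : y ∈ Set.Ico (0:ℝ) 1
    · obtain ⟨x, hx, hfx⟩ := P.hbij.surjOn hy
      exact ⟨x, hfx⟩
    · exact ⟨y, P.hid y hy⟩

/-- The inverse of `f`. -/
def finv (_Q : Pieces f) : ℝ → ℝ := Function.invFun f

lemma f_finv (y : ℝ) : f (P.finv y) = y := Function.rightInverse_invFun P.fbij.2 y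

lemma finv_f (x : ℝ) : P.finv (f x) = x := Function.leftInverse_invFun P.fbij.1 x

lemma f_iter_finv_iter (k : ℕ) (t : ℝ) : f^[k] (P.finv^[k] t) = t := by
  induction k with
  | zero => rfl
  | succ n ih =>
      rw [Function.iterate_succ_apply' P.finv, Function.iterate_succ_apply]
      rw [P.f_finv, ih]

lemma finv_iter_mem {t : ℝ} (ht : t ∈ Set.Ico (0:ℝ) 1) (k : ℕ) :
    P.finv^[k] t ∈ Set.Ico (0:ℝ) 1 := by
  induction k with
  | zero => exact ht
  | succ n ih =>
      rw [Function.iterate_succ_apply']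
      by_contra hc
      have := P.hid _ hc
      rw [P.f_finv] at this
      exact hc (this ▸ ih)

/-- The right cocycle. -/
def A (Q : Pieces f) : ℕ → ℝ → AffP
  | 0, _ => 1
  | n+1, x => Q.αg (f^[n] x) * Q.A n x

/-- The left cocycle. -/
def B (Q : Pieces f) : ℕ → ℝ → AffP
  | 0, _ => 1
  | n+1, x => Q.βg (Q.F^[n] x) * Q.B n x

lemma A_zero (x : ℝ) : P.A 0 x = 1 := rfl
lemma A_succ (n : ℕ) (x : ℝ) : P.A (n+1) x = P.αg (f^[n] x) * P.A n x := rfl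
lemma B_zero (x : ℝ) : P.B 0 x = 1 := rfl
lemma B_succ (n : ℕ) (x : ℝ) : P.B (n+1) x = P.βg (P.F^[n] x) * P.B n x := rfl

lemma affA (n : ℕ) (x : ℝ) : (P.A n x).aff x = f^[n] x := by
  induction n with
  | zero => simp [A, aff_one]
  | succ n ih =>
      rw [P.A_succ, aff_mul, ih, P.aff_αg, Function.iterate_succ_apply']

lemma affB (n : ℕ) (x : ℝ) : (P.B n x).aff x = P.F^[n] x := by
  induction n with
  | zero => simp [B, aff_one]
  | succ n ih =>
      rw [P.B_succ, aff_mul, ih, ← F, Function.iterate_succ_apply']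

lemma A_spec (n : ℕ) (x : ℝ) : RA (f^[n]) x (P.A n x) := by
  induction n with
  | zero =>
      filter_upwards with z
      simp [aff_one, A]
  | succ n ih =>
      have hcomp := RA.comp ih (by rw [P.affA n x]; exact P.αg_spec (f^[n] x))
      rw [Function.iterate_succ' f n]
      exact hcomp

lemma B_spec (n : ℕ) (x : ℝ) : LA (f^[n]) x (P.B n x) := by
  induction n with
  | zero =>
      filter_upwards with z
      simp [aff_one, B]
  | succ n ih =>
      have hcomp := LA.comp ih (by rw [P.affB n x]; exact P.βg_spec (P.F^[n] x))
      rw [Function.iterate_succ' f n]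
      exact hcomp

lemma A_shift (n : ℕ) (x : ℝ) : P.A (n+1) x = P.A n (f x) * P.αg x := by
  induction n with
  | zero => show P.αg (f^[0] x) * P.A 0 x = _; simp [A, one_mul, mul_one]
  | succ n ih =>
      show P.αg (f^[n+1] x) * P.A (n+1) x = P.αg (f^[n] (f x)) * P.A n (f x) * P.αg x
      rw [ih, Function.iterate_succ_apply, mul_assoc]

lemma B_shift (n : ℕ) (x : ℝ) : P.B (n+1) x = P.B n (P.F x) * P.βg x := by
  induction n with
  | zero => show P.βg (P.F^[0] x) * P.B 0 x = _; simp [B, one_mul, mul_one]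
  | succ n ih =>
      show P.βg (P.F^[n+1] x) * P.B (n+1) x = P.βg (P.F^[n] (P.F x)) * P.B n (P.F x) * P.βg x
      rw [ih, Function.iterate_succ_apply, mul_assoc]

/-- The break condition after `n` steps at `x`. -/
def brk (n : ℕ) (x : ℝ) : Prop := P.A n x ≠ P.B n x

lemma brk_shift {x : ℝ} (hx : x ∉ P.Astar) (n : ℕ) :
    P.brk (n+1) x ↔ P.brk n (f x) := by
  unfold brk
  rw [P.A_shift, P.B_shift, P.F_eq_f hx, P.αβ_eq hx]
  constructor
  · intro h he
    exact h (by rw [he])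
  · intro h he
    exact h (mul_right_cancel he)

/-- The finite set of "event" points for the freezing lemma. -/
def W : Set ℝ := P.Astar ∪ (fun y => P.finv (P.F y)) '' P.Astar

lemma W_finite : P.W.Finite := P.Astar_finite.union (P.Astar_finite.image _)

lemma freeze {x : ℝ} {n : ℕ} (hr : f^[n] x ∉ P.W) :
    (P.A (n+1) x = P.B (n+1) x) ↔ (P.A n x = P.B n x) := by
  have hrA : f^[n] x ∉ P.Astar := fun h => hr (Or.inl h)
  constructor
  · intro h
    show P.A n x = P.B n x
    have hval : f^[n+1] x = P.F^[n+1] x := by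
      rw [← P.affA (n+1) x, ← P.affB (n+1) x, h]
    rw [Function.iterate_succ_apply' f, Function.iterate_succ_apply' P.F] at hval
    by_cases hl : P.F^[n] x ∈ P.Astar
    · exfalso
      apply hr
      right
      refine ⟨P.F^[n] x, hl, ?_⟩
      show P.finv (P.F (P.F^[n] x)) = f^[n] x
      rw [← hval, P.finv_f]
    · rw [P.F_eq_f hl] at hval
      have heq : f^[n] x = P.F^[n] x := P.fbij.1 hval
      have hgerm : P.βg (P.F^[n] x) = P.αg (f^[n] x) := by
        rw [← heq, P.αβ_eq hrA]
      show P.A n x = P.B n x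
      have h' : P.αg (f^[n] x) * P.A n x = P.αg (f^[n] x) * P.B n x := by
        have := h
        rw [P.A_succ, P.B_succ, hgerm] at this
        exact this
      exact mul_left_cancel h'
  · intro h
    have hval : f^[n] x = P.F^[n] x := by
      rw [← P.affA n x, ← P.affB n x, h]
    rw [P.A_succ, P.B_succ, ← hval, P.αβ_eq hrA, h]

lemma brk_zero_false (x : ℝ) : ¬ P.brk 0 x := fun h => h rfl

lemma BP_iff {x : ℝ} (hx : x ∈ Set.Ioo (0:ℝ) 1) (n : ℕ) :
    x ∈ BP (f^[n]) ↔ P.brk n x := by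
  rw [mem_BP_iff hx (P.A_spec n x) (P.B_spec n x)]
  exact ne_comm

lemma Tset_subset_Ico : P.Tset ⊆ Set.Ico (0:ℝ) 1 := by
  rintro x ⟨i, hi, rfl⟩
  have hi' : i < P.p := hi
  refine ⟨P.a_nonneg (le_of_lt hi'), ?_⟩
  have := P.hmono i P.p hi' (le_refl _)
  rwa [P.hap] at this

lemma decomp : ∀ n x, x ∈ Set.Ico (0:ℝ) 1 → P.brk n x →
    ∃ t ∈ P.Tset, ∃ k m : ℕ, k + m = n ∧ x = P.finv^[k] t ∧
      (∀ j, 1 ≤ j → j ≤ k → P.finv^[j] t ∉ P.Tset) ∧ P.brk m t := by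
  intro n
  induction n with
  | zero => exact fun x hx hb => absurd hb (P.brk_zero_false x)
  | succ n ih =>
      intro x hx hb
      by_cases hT : x ∈ P.Tset
      · exact ⟨x, hT, 0, n+1, by omega, rfl, fun j h1 h2 => absurd (le_trans h1 h2) (by omega), hb⟩
      · have hA : x ∉ P.Astar := P.not_Astar_of_Ico hx hT
        have hb' : P.brk n (f x) := (P.brk_shift hA n).1 hb
        have hfx : f x ∈ Set.Ico (0:ℝ) 1 := P.hbij.mapsTo hx
        obtain ⟨t, ht, k, m, hkm, hx', havoid, hbt⟩ := ih (f x) hfx hb'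
        refine ⟨t, ht, k+1, m, by omega, ?_, ?_, hbt⟩
        · rw [Function.iterate_succ_apply', ← hx', P.finv_f]
        · intro j h1 h2
          rcases eq_or_lt_of_le h2 with he | hlt
          · rw [he, Function.iterate_succ_apply', ← hx', P.finv_f]
            exact hT
          · exact havoid j h1 (by omega)

lemma brk_pull {t : ℝ} (htIco : t ∈ Set.Ico (0:ℝ) 1)
    (havoid : ∀ j, 1 ≤ j → P.finv^[j] t ∉ P.Tset) :
    ∀ k m, (P.brk (m + k) (P.finv^[k] t) ↔ P.brk m t) := by
  intro k
  induction k with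
  | zero => intro m; rfl
  | succ k ih =>
      intro m
      have hmem : P.finv^[k+1] t ∈ Set.Ico (0:ℝ) 1 := P.finv_iter_mem htIco _
      have hnT : P.finv^[k+1] t ∉ P.Tset := havoid _ (by omega)
      have hA : P.finv^[k+1] t ∉ P.Astar := P.not_Astar_of_Ico hmem hnT
      have hstep : m + (k+1) = (m + k) + 1 := by omega
      rw [hstep, P.brk_shift hA]
      have hfx : f (P.finv^[k+1] t) = P.finv^[k] t := by
        rw [Function.iterate_succ_apply', P.f_finv]
      rw [hfx]
      exact ih m

lemma orbit_inj {t : ℝ} (hnp : ∀ k, 1 ≤ k → P.finv^[k] t ≠ t) :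
    Function.Injective (fun m : ℕ => f^[m] t) := by
  have key : ∀ k, 1 ≤ k → f^[k] t ≠ t := by
    intro k hk he
    apply hnp k hk
    apply P.fbij.1.iterate k
    rw [P.f_iter_finv_iter, he]
  intro i j hij
  simp only at hij
  rcases lt_trichotomy i j with h | h | h
  · exfalso
    have : f^[i] (f^[j-i] t) = f^[i] t := by
      rw [← Function.iterate_add_apply, show i + (j - i) = j by omega, hij]
    have h2 := (P.fbij.1.iterate i) this
    exact key (j-i) (by omega) h2
  · exact h
  · exfalso
    have : f^[j] (f^[i-j] t) = f^[j] t := by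
      rw [← Function.iterate_add_apply, show j + (i - j) = i by omega, ← hij]
    have h2 := (P.fbij.1.iterate j) this
    exact key (i-j) (by omega) h2

lemma finv_orbit_inj {t : ℝ} (hnp : ∀ k, 1 ≤ k → P.finv^[k] t ≠ t) :
    Function.Injective (fun k : ℕ => P.finv^[k] t) := by
  intro i j hij
  simp only at hij
  rcases lt_trichotomy i j with h | h | h
  · exfalso
    apply hnp (j - i) (by omega)
    have : f^[i] (P.finv^[i] t) = f^[i] (P.finv^[i] (P.finv^[j-i] t)) := by
      rw [← Function.iterate_add_apply P.finv i (j-i), show i + (j-i) = j by omega, ← hij]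
    rw [P.f_iter_finv_iter, P.f_iter_finv_iter] at this
    rw [← this]
  · exact h
  · exfalso
    apply hnp (i - j) (by omega)
    have : f^[j] (P.finv^[j] t) = f^[j] (P.finv^[j] (P.finv^[i-j] t)) := by
      rw [← Function.iterate_add_apply P.finv j (i-j), show j + (i-j) = i by omega, hij]
    rw [P.f_iter_finv_iter, P.f_iter_finv_iter] at this
    rw [← this]

lemma tail_const {t : ℝ} (hinj : Function.Injective (fun m : ℕ => f^[m] t)) :
    ∃ M : ℕ, ∀ m, M ≤ m → (P.brk (m+1) t ↔ P.brk m t) := by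
  have hfin : {m : ℕ | f^[m] t ∈ P.W}.Finite := by
    have := P.W_finite.preimage (f := fun m : ℕ => f^[m] t) hinj.injOn
    exact this
  obtain ⟨M, hM⟩ := hfin.bddAbove
  refine ⟨M + 1, fun m hm => ?_⟩
  have hout : f^[m] t ∉ P.W := by
    intro hc
    have := hM (show m ∈ {m : ℕ | f^[m] t ∈ P.W} from hc)
    omega
  exact not_congr (P.freeze hout)

end Pieces

lemma iff_of_tail {Q : ℕ → Prop} {M : ℕ} (h : ∀ m, M ≤ m → (Q (m+1) ↔ Q m)) :
    ∀ m, M ≤ m → (Q m ↔ Q M) := by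
  intro m hm
  induction m with
  | zero =>
      have : M = 0 := Nat.le_zero.1 hm
      rw [this]
  | succ k ih =>
      rcases eq_or_lt_of_le hm with he | hlt
      · rw [he]
      · have hk : M ≤ k := by omega
        exact (h k hk).trans (ih hk)

lemma ncard_biUnion_le {α β : Type*} (s : Finset α) (t : α → Set β)
    (ht : ∀ a ∈ s, (t a).Finite) :
    (⋃ a ∈ s, t a).ncard ≤ ∑ a ∈ s, (t a).ncard := by
  classical
  induction s using Finset.induction_on with
  | empty => simp
  | @insert a s ha ih =>
      rw [Finset.set_biUnion_insert, Finset.sum_insert ha]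
      refine le_trans (Set.ncard_union_le _ _) ?_
      have := ih (fun b hb => ht b (Finset.mem_insert_of_mem hb))
      omega

namespace Pieces

variable {f : ℝ → ℝ} (P : Pieces f)

include P in
lemma BP_finite (n : ℕ) : (BP (f^[n])).Finite := by
  have hsub : BP (f^[n]) ⊆ {0} ∪ ⋃ t ∈ P.Tset, (fun k => P.finv^[k] t) '' (Set.Iio n) := by
    intro x hx
    rcases hx with hx | hx
    · exact Or.inl hx
    · right
      have hIoo : x ∈ Set.Ioo (0:ℝ) 1 := hx.1
      have hbrk : P.brk n x := (P.BP_iff hIoo n).1 (Or.inr hx)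
      obtain ⟨t, ht, k, m, hkm, hx', havoid, hbt⟩ :=
        P.decomp n x ⟨le_of_lt hIoo.1, hIoo.2⟩ hbrk
      have hm : 1 ≤ m := by
        rcases Nat.eq_zero_or_pos m with h0 | h0
        · exact absurd hbt (by rw [h0]; exact P.brk_zero_false t)
        · exact h0
      exact Set.mem_biUnion ht ⟨k, show k < n by omega, hx'.symm⟩
  apply Set.Finite.subset _ hsub
  apply (Set.finite_singleton (0:ℝ)).union
  apply Set.Finite.biUnion P.Tset_finite
  exact fun t _ => (Set.finite_Iio n).image _

lemma linear_growth (t : ℝ) (ht : t ∈ P.Tset)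
    (havoid : ∀ k, 1 ≤ k → P.finv^[k] t ∉ P.Tset)
    (hinf : {m : ℕ | P.brk m t}.Infinite) :
    ∃ M : ℕ, ∀ n, M + 1 ≤ n → (n - M : ℕ) ≤ (BP (f^[n])).ncard := by
  have hnp : ∀ k, 1 ≤ k → P.finv^[k] t ≠ t := fun k hk he => havoid k hk (by rw [he]; exact ht)
  have hinj := P.orbit_inj hnp
  obtain ⟨M, hM⟩ := P.tail_const hinj
  have hconst := iff_of_tail (Q := fun m => P.brk m t) hM
  obtain ⟨m0, hm0mem, hm0gt⟩ := hinf.exists_gt M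
  have hbM : P.brk M t := (hconst m0 (le_of_lt hm0gt)).1 hm0mem
  have hall : ∀ m, M ≤ m → P.brk m t := fun m hm => (hconst m hm).2 hbM
  have htIco : t ∈ Set.Ico (0:ℝ) 1 := P.Tset_subset_Ico ht
  refine ⟨M, fun n hn => ?_⟩
  classical
  set Sfin : Finset ℝ := (Finset.Icc 1 (n - M)).image (fun k => P.finv^[k] t) with hS
  have hcard : Sfin.card = n - M := by
    rw [hS, Finset.card_image_of_injective _ (P.finv_orbit_inj hnp), Nat.card_Icc]
    omega
  have hsub : (↑Sfin : Set ℝ) ⊆ BP (f^[n]) := by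
    intro x hx
    simp only [hS, Finset.coe_image, Set.mem_image, Finset.mem_coe, Finset.mem_Icc] at hx
    obtain ⟨k, ⟨hk1, hk2⟩, rfl⟩ := hx
    have hmem : P.finv^[k] t ∈ Set.Ico (0:ℝ) 1 := P.finv_iter_mem htIco k
    have hne0 : P.finv^[k] t ≠ 0 := by
      intro he
      exact havoid k hk1 (he ▸ P.zero_mem_Tset)
    have hIoo : P.finv^[k] t ∈ Set.Ioo (0:ℝ) 1 :=
      ⟨lt_of_le_of_ne hmem.1 (Ne.symm hne0), hmem.2⟩
    rw [P.BP_iff hIoo n]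
    have hbrk : P.brk ((n - k) + k) (P.finv^[k] t) ↔ P.brk (n - k) t :=
      P.brk_pull htIco havoid k (n - k)
    have hnk : (n - k) + k = n := by omega
    rw [hnk] at hbrk
    exact hbrk.2 (hall (n - k) (by omega))
  calc (n - M : ℕ) = Sfin.card := hcard.symm
    _ = (↑Sfin : Set ℝ).ncard := (Set.ncard_coe_finset Sfin).symm
    _ ≤ (BP (f^[n])).ncard := Set.ncard_le_ncard hsub (P.BP_finite n)

/-- The per-breakpoint index sets for the bounded case. -/
def G (t : ℝ) (n : ℕ) : Set ℕ :=
  {k | k < n ∧ (∀ j, 1 ≤ j → j ≤ k → P.finv^[j] t ∉ P.Tset) ∧ P.brk (n - k) t}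

lemma G_finite (t : ℝ) (n : ℕ) : (P.G t n).Finite :=
  (Set.finite_Iio n).subset (fun k hk => hk.1)

lemma G_bound (hb : ∀ t ∈ P.Tset, (∀ k, 1 ≤ k → P.finv^[k] t ∉ P.Tset) →
    {m : ℕ | P.brk m t}.Finite) :
    ∀ t : ℝ, ∃ c : ℕ, t ∈ P.Tset → ∀ n, (P.G t n).ncard ≤ c := by
  intro t
  by_cases htT : t ∈ P.Tset
  · by_cases hav : ∀ k, 1 ≤ k → P.finv^[k] t ∉ P.Tset
    · have hfin := hb t htT hav
      refine ⟨{m : ℕ | P.brk m t}.ncard, fun _ n => ?_⟩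
      have himg : (fun k => n - k) '' (P.G t n) ⊆ {m : ℕ | P.brk m t} := by
        rintro m ⟨k, hk, rfl⟩
        exact hk.2.2
      have hinj : Set.InjOn (fun k => n - k) (P.G t n) := by
        intro i hi j hj hij
        simp only at hij
        have := hi.1; have := hj.1
        omega
      calc (P.G t n).ncard = ((fun k => n - k) '' (P.G t n)).ncard :=
            (Set.ncard_image_of_injOn hinj).symm
        _ ≤ {m : ℕ | P.brk m t}.ncard := Set.ncard_le_ncard himg hfin
    · push_neg at hav
      obtain ⟨k0, hk01, hk0T⟩ := hav
      refine ⟨k0, fun _ n => ?_⟩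
      have hsub : P.G t n ⊆ Set.Iio k0 := by
        intro k hk
        by_contra hc
        have hk0k : k0 ≤ k := not_lt.1 (by simpa using hc)
        exact (hk.2.1 k0 hk01 hk0k) hk0T
      calc (P.G t n).ncard ≤ (Set.Iio k0).ncard :=
            Set.ncard_le_ncard hsub (Set.finite_Iio k0)
        _ = k0 := by
            rw [show (Set.Iio k0 : Set ℕ) = ↑(Finset.range k0) by ext; simp,
              Set.ncard_coe_finset, Finset.card_range]
  · exact ⟨0, fun h => absurd h htT⟩

lemma bounded_case (hb : ∀ t ∈ P.Tset, (∀ k, 1 ≤ k → P.finv^[k] t ∉ P.Tset) →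
    {m : ℕ | P.brk m t}.Finite) :
    ∃ C : ℕ, ∀ n, (BP (f^[n])).ncard ≤ C := by
  classical
  choose c hc using P.G_bound hb
  set Tfin : Finset ℝ := P.Tset_finite.toFinset with hTfin
  refine ⟨1 + ∑ t ∈ Tfin, c t, fun n => ?_⟩
  have hsub : BP (f^[n]) ⊆ {0} ∪ ⋃ t ∈ Tfin, (fun k => P.finv^[k] t) '' (P.G t n) := by
    intro x hx
    rcases hx with hx | hx
    · exact Or.inl hx
    · right
      have hIoo : x ∈ Set.Ioo (0:ℝ) 1 := hx.1
      have hbrk : P.brk n x := (P.BP_iff hIoo n).1 (Or.inr hx)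
      obtain ⟨t, ht, k, m, hkm, hx', havoid, hbt⟩ :=
        P.decomp n x ⟨le_of_lt hIoo.1, hIoo.2⟩ hbrk
      have hm : 1 ≤ m := by
        rcases Nat.eq_zero_or_pos m with h0 | h0
        · exact absurd hbt (by rw [h0]; exact P.brk_zero_false t)
        · exact h0
      have htf : t ∈ Tfin := by rw [hTfin, Set.Finite.mem_toFinset]; exact ht
      refine Set.mem_biUnion htf ⟨k, ⟨by omega, havoid, ?_⟩, hx'.symm⟩
      have : n - k = m := by omega
      rw [this]
      exact hbt
  have h1 : (BP (f^[n])).ncard ≤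
      ({0} ∪ ⋃ t ∈ Tfin, (fun k => P.finv^[k] t) '' (P.G t n)).ncard := by
    refine Set.ncard_le_ncard hsub ?_
    apply (Set.finite_singleton (0:ℝ)).union
    apply Set.Finite.biUnion (Tfin.finite_toSet)
    exact fun t _ => ((P.G_finite t n).image _)
  refine le_trans h1 (le_trans (Set.ncard_union_le _ _) ?_)
  have h2 : (⋃ t ∈ Tfin, (fun k => P.finv^[k] t) '' (P.G t n)).ncard ≤
      ∑ t ∈ Tfin, c t := by
    refine le_trans (ncard_biUnion_le Tfin _ (fun t _ => (P.G_finite t n).image _)) ?_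
    apply Finset.sum_le_sum
    intro t htf
    have htT : t ∈ P.Tset := by rwa [hTfin, Set.Finite.mem_toFinset] at htf
    exact le_trans (Set.ncard_image_le (P.G_finite t n)) (hc t htT n)
  have h3 : ({(0:ℝ)} : Set ℝ).ncard = 1 := Set.ncard_singleton 0
  omega

end Pieces



theorem stmt_6 (f : ℝ → ℝ) (hf : IsAIET f) :
    (∃ C : ℕ, ∀ n : ℕ, (BP (f^[n])).ncard ≤ C) ∨
    (∃ C : ℝ, 0 < C ∧ ∃ N₀ : ℕ, ∀ n : ℕ, N₀ ≤ n →
      C * n ≤ ((BP (f^[n])).ncard : ℝ)) := by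
  obtain ⟨p, a, hp, ha0, hap, hmono, hpc⟩ := hf.piecewise
  choose! lam beta hpos hfp using hpc
  set P : Pieces f := ⟨p, a, lam, beta, hf.bijOn, hf.id_outside, hp, ha0, hap,
    hmono, hpos, hfp⟩ with hP
  by_cases h : ∃ t ∈ P.Tset, (∀ k, 1 ≤ k → P.finv^[k] t ∉ P.Tset) ∧
      {m : ℕ | P.brk m t}.Infinite
  · right
    obtain ⟨t, ht, hav, hinf⟩ := h
    obtain ⟨M, hM⟩ := P.linear_growth t ht hav hinf
    refine ⟨1/2, by norm_num, 2*M+2, fun n hn => ?_⟩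
    have h1 : (n - M : ℕ) ≤ (BP (f^[n])).ncard := hM n (by omega)
    have h2 : ((n - M : ℕ) : ℝ) = (n : ℝ) - M := by
      rw [Nat.cast_sub (by omega)]
    have hcast : ((2*M+2 : ℕ) : ℝ) ≤ (n : ℝ) := Nat.cast_le.2 hn
    push_cast at hcast
    calc (1/2 : ℝ) * n ≤ (n : ℝ) - M := by linarith
      _ = ((n - M : ℕ) : ℝ) := h2.symm
      _ ≤ ((BP (f^[n])).ncard : ℝ) := Nat.cast_le.2 h1
  · left
    push_neg at h
    exact P.bounded_case (fun t ht hav => h t ht hav)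
end
end

section
/- If f is a distorted element of the group of AIETs of [0,1), then the sequence of cardinalities #BP(f^n) of break points of the iterates of f is bounded. -/
open Set Filter Function MeasureTheory Topology

noncomputable section

namespace AIETproof

/-- Evaluation of an affine pair. -/
def ev (g : ℝ × ℝ) (x : ℝ) : ℝ := g.1 * x + g.2

/-- Composition of affine pairs. -/
def cp (g h : ℝ × ℝ) : ℝ × ℝ := (g.1 * h.1, g.1 * h.2 + g.2)

@[simp] lemma ev_cp (g h : ℝ × ℝ) (x : ℝ) : ev (cp g h) x = ev g (ev h x) := by
  simp [ev, cp]; ring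

lemma cp_cancel {a b g : ℝ × ℝ} (hg : g.1 ≠ 0) (h : cp a g = cp b g) : a = b := by
  have h1 : a.1 * g.1 = b.1 * g.1 := congrArg Prod.fst h
  have h2 : a.1 * g.2 + a.2 = b.1 * g.2 + b.2 := congrArg Prod.snd h
  have ha1 : a.1 = b.1 := by
    exact mul_right_cancel₀ hg h1
  have : a.2 = b.2 := by rw [ha1] at h2; linarith
  exact Prod.ext ha1 this

/-- `g` is the germ of `f` on the right of `x`. -/
def IsRg (f : ℝ → ℝ) (x : ℝ) (g : ℝ × ℝ) : Prop :=
  0 < g.1 ∧ ∃ δ > (0:ℝ), ∀ y, x ≤ y → y < x + δ → f y = ev g y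

/-- `g` is the germ of `f` on the left of `x`. -/
def IsLg (f : ℝ → ℝ) (x : ℝ) (g : ℝ × ℝ) : Prop :=
  0 < g.1 ∧ ∃ δ > (0:ℝ), ∀ y, x - δ < y → y < x → f y = ev g y

lemma IsRg.apply {f : ℝ → ℝ} {x : ℝ} {g : ℝ × ℝ} (h : IsRg f x g) : f x = ev g x := by
  obtain ⟨-, δ, hδ, H⟩ := h
  exact H x le_rfl (by linarith)

lemma affine_eq_of_eqOn {g g' : ℝ × ℝ} {u v : ℝ} (huv : u ≠ v)
    (h1 : ev g u = ev g' u) (h2 : ev g v = ev g' v) : g = g' := by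
  simp only [ev] at h1 h2
  have : g.1 = g'.1 := by
    have := sub_ne_zero.2 huv
    have h3 : g.1 * (u - v) = g'.1 * (u - v) := by ring_nf; linarith
    exact mul_right_cancel₀ this h3
  refine Prod.ext this ?_
  rw [this] at h1; linarith

lemma IsRg.unique {f : ℝ → ℝ} {x : ℝ} {g g' : ℝ × ℝ}
    (h : IsRg f x g) (h' : IsRg f x g') : g = g' := by
  obtain ⟨-, δ, hδ, H⟩ := h
  obtain ⟨-, δ', hδ', H'⟩ := h'
  set ε := min δ δ' with hε
  have hε0 : 0 < ε := lt_min hδ hδ'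
  have e1 : ev g x = ev g' x := by
    rw [← H x le_rfl (by linarith [min_le_left δ δ'])]
    exact H' x le_rfl (by linarith [min_le_right δ δ'])
  have e2 : ev g (x + ε/2) = ev g' (x + ε/2) := by
    rw [← H _ (by linarith) (by linarith [min_le_left δ δ'])]
    exact H' _ (by linarith) (by linarith [min_le_right δ δ'])
  exact affine_eq_of_eqOn (by linarith) e1 e2

lemma IsLg.unique {f : ℝ → ℝ} {x : ℝ} {g g' : ℝ × ℝ}
    (h : IsLg f x g) (h' : IsLg f x g') : g = g' := by
  obtain ⟨-, δ, hδ, H⟩ := h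
  obtain ⟨-, δ', hδ', H'⟩ := h'
  set ε := min δ δ' with hε
  have hε0 : 0 < ε := lt_min hδ hδ'
  have hl : ε ≤ δ := min_le_left δ δ'
  have hr : ε ≤ δ' := min_le_right δ δ'
  have e1 : ev g (x - ε/2) = ev g' (x - ε/2) := by
    rw [← H _ (by linarith) (by linarith)]
    exact H' _ (by linarith) (by linarith)
  have e2 : ev g (x - ε/4) = ev g' (x - ε/4) := by
    rw [← H _ (by linarith) (by linarith)]
    exact H' _ (by linarith) (by linarith)
  exact affine_eq_of_eqOn (fun hc => by linarith [hc]) e1 e2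

lemma IsRg.comp {h G : ℝ → ℝ} {x : ℝ} {g₁ g₂ : ℝ × ℝ}
    (H1 : IsRg h x g₁) (H2 : IsRg G (ev g₁ x) g₂) : IsRg (G ∘ h) x (cp g₂ g₁) := by
  obtain ⟨hp1, δ₁, hδ₁, K1⟩ := H1
  obtain ⟨hp2, δ₂, hδ₂, K2⟩ := H2
  refine ⟨mul_pos hp2 hp1, min δ₁ (δ₂ / g₁.1), lt_min hδ₁ (div_pos hδ₂ hp1), fun y hy1 hy2 => ?_⟩
  have hyδ1 : y < x + δ₁ := lt_of_lt_of_le hy2 (by linarith [min_le_left δ₁ (δ₂ / g₁.1)])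
  have hyδ2 : y < x + δ₂ / g₁.1 := lt_of_lt_of_le hy2 (by linarith [min_le_right δ₁ (δ₂ / g₁.1)])
  have hhy : h y = ev g₁ y := K1 y hy1 hyδ1
  have hmem1 : ev g₁ x ≤ ev g₁ y := by
    simp only [ev]; nlinarith
  have hmem2 : ev g₁ y < ev g₁ x + δ₂ := by
    simp only [ev]
    have : g₁.1 * (y - x) < δ₂ := by
      rw [← lt_div_iff₀' hp1]; linarith
    nlinarith
  calc (G ∘ h) y = G (ev g₁ y) := by rw [Function.comp_apply, hhy]
    _ = ev g₂ (ev g₁ y) := K2 _ hmem1 hmem2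
    _ = ev (cp g₂ g₁) y := (ev_cp _ _ _).symm

lemma IsLg.comp {h G : ℝ → ℝ} {x : ℝ} {g₁ g₂ : ℝ × ℝ}
    (H1 : IsLg h x g₁) (H2 : IsLg G (ev g₁ x) g₂) : IsLg (G ∘ h) x (cp g₂ g₁) := by
  obtain ⟨hp1, δ₁, hδ₁, K1⟩ := H1
  obtain ⟨hp2, δ₂, hδ₂, K2⟩ := H2
  refine ⟨mul_pos hp2 hp1, min δ₁ (δ₂ / g₁.1), lt_min hδ₁ (div_pos hδ₂ hp1), fun y hy1 hy2 => ?_⟩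
  have hyδ1 : x - δ₁ < y := lt_of_le_of_lt (by linarith [min_le_left δ₁ (δ₂ / g₁.1)]) hy1
  have hyδ2 : x - δ₂ / g₁.1 < y := lt_of_le_of_lt (by linarith [min_le_right δ₁ (δ₂ / g₁.1)]) hy1
  have hhy : h y = ev g₁ y := K1 y hyδ1 hy2
  have hmem1 : ev g₁ x - δ₂ < ev g₁ y := by
    simp only [ev]
    have : g₁.1 * (x - y) < δ₂ := by
      rw [← lt_div_iff₀' hp1]; linarith
    nlinarith
  have hmem2 : ev g₁ y < ev g₁ x := by simp only [ev]; nlinarith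
  calc (G ∘ h) y = G (ev g₁ y) := by rw [Function.comp_apply, hhy]
    _ = ev g₂ (ev g₁ y) := K2 _ hmem1 hmem2
    _ = ev (cp g₂ g₁) y := (ev_cp _ _ _).symm

lemma isRg_id (x : ℝ) : IsRg id x (1, 0) :=
  ⟨one_pos, 1, one_pos, fun y _ _ => by simp [ev]⟩

lemma isLg_id (x : ℝ) : IsLg id x (1, 0) :=
  ⟨one_pos, 1, one_pos, fun y _ _ => by simp [ev]⟩


lemma IsRg.rightD_eq {f : ℝ → ℝ} {x : ℝ} {g : ℝ × ℝ} (h : IsRg f x g) : rightD f x = g.1 := by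
  obtain ⟨hp, δ, hδ, H⟩ := h
  have hev : f =ᶠ[nhdsWithin x (Set.Ici x)] (fun y => g.1 * y + g.2) := by
    filter_upwards [Ico_mem_nhdsGE_of_mem (⟨le_refl x, by linarith⟩ : x ∈ Set.Ico x (x+δ))] with y hy
    exact H y hy.1 hy.2
  have heq : derivWithin f (Set.Ici x) x = derivWithin (fun y => g.1*y+g.2) (Set.Ici x) x :=
    hev.derivWithin_eq (H x le_rfl (by linarith))
  rw [rightD, heq]
  have hd : HasDerivWithinAt (fun y => g.1*y+g.2) g.1 (Set.Ici x) x := by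
    simpa using (((hasDerivAt_id x).const_mul g.1).add_const g.2).hasDerivWithinAt
  exact hd.derivWithin (uniqueDiffOn_Ici x x Set.self_mem_Ici)

lemma IsLg.leftLim_eq {f : ℝ → ℝ} {x : ℝ} {g : ℝ × ℝ} (h : IsLg f x g) :
    Function.leftLim f x = ev g x := by
  obtain ⟨hp, δ, hδ, H⟩ := h
  have hne : (nhdsWithin x (Set.Iio x)) ≠ ⊥ := (inferInstance : (nhdsWithin x (Set.Iio x)).NeBot).ne'
  apply leftLim_eq_of_tendsto
  have ht : Filter.Tendsto (fun y => g.1*y+g.2) (nhdsWithin x (Set.Iio x)) (nhds (ev g x)) := by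
    have hc : Filter.Tendsto (fun y => g.1*y+g.2) (nhds x) (nhds (g.1*x+g.2)) :=
      ((continuous_const.mul continuous_id).add continuous_const).tendsto x
    exact hc.mono_left nhdsWithin_le_nhds
  apply ht.congr'
  filter_upwards [Ioo_mem_nhdsLT_of_mem (⟨by linarith, le_refl x⟩ : x ∈ Set.Ioc (x-δ) x)] with y hy
  exact (H y hy.1 hy.2).symm

lemma IsLg.leftLim_rightD_eq {f : ℝ → ℝ} {x : ℝ} {g : ℝ × ℝ} (h : IsLg f x g) :
    Function.leftLim (rightD f) x = g.1 := by
  obtain ⟨hp, δ, hδ, H⟩ := h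
  have key : ∀ y, x - δ < y → y < x → rightD f y = g.1 := fun y h1 h2 =>
    IsRg.rightD_eq ⟨hp, x - y, by linarith, fun z hz1 hz2 => H z (by linarith) (by linarith)⟩
  have hne : (nhdsWithin x (Set.Iio x)) ≠ ⊥ := (inferInstance : (nhdsWithin x (Set.Iio x)).NeBot).ne'
  apply leftLim_eq_of_tendsto
  apply tendsto_const_nhds.congr'
  filter_upwards [Ioo_mem_nhdsLT_of_mem (⟨by linarith, le_refl x⟩ : x ∈ Set.Ioc (x-δ) x)] with y hy
  exact (key y hy.1 hy.2).symm

lemma notMem_BP {f : ℝ → ℝ} {x : ℝ} {g : ℝ × ℝ} (hx : x ∈ Set.Ioo (0:ℝ) 1)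
    (hr : IsRg f x g) (hl : IsLg f x g) : x ∉ BP f := by
  intro hmem
  rcases hmem with h0 | hrest
  · rw [Set.mem_singleton_iff] at h0
    rw [h0] at hx
    exact absurd hx.1 (lt_irrefl 0)
  · rcases hrest.2 with hv | hs
    · exact hv (by rw [hl.leftLim_eq, hr.apply])
    · exact hs (by rw [hl.leftLim_rightD_eq, hr.rightD_eq])

lemma mem_BP {f : ℝ → ℝ} {x : ℝ} {gr gl : ℝ × ℝ} (hx : x ∈ Set.Ioo (0:ℝ) 1)
    (hr : IsRg f x gr) (hl : IsLg f x gl) (hne : gl ≠ gr) : x ∈ BP f := by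
  apply Set.mem_union_right
  rw [Set.mem_sep_iff]
  refine ⟨hx, ?_⟩
  by_contra hcon
  push_neg at hcon
  obtain ⟨h1, h2⟩ := hcon
  apply hne
  have e1 : gl.1 = gr.1 := by rw [← hl.leftLim_rightD_eq, h2, hr.rightD_eq]
  have e2 : ev gl x = ev gr x := by rw [← hl.leftLim_eq, h1, hr.apply]
  refine Prod.ext e1 ?_
  simp only [ev, e1] at e2
  linarith

lemma exists_rg {f : ℝ → ℝ} (hf : IsAIET f) {x : ℝ} (hx : x ∈ Set.Ico (0:ℝ) 1) :
    ∃ g, IsRg f x g := by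
  classical
  obtain ⟨p, a, hp, h0, h1, hmono, hpiece⟩ := hf.piecewise
  set i := Nat.findGreatest (fun i => a i ≤ x) p with hi
  have hPi : a i ≤ x := Nat.findGreatest_spec (P := fun i => a i ≤ x) (Nat.zero_le p)
    (show a 0 ≤ x by rw [h0]; exact hx.1)
  have hip : i ≤ p := Nat.findGreatest_le p
  have hilt : i < p := by
    rcases lt_or_eq_of_le hip with h | he
    · exact h
    · exfalso; have : a p ≤ x := by rw [← he]; exact hPi
      rw [h1] at this; linarith [hx.2]
  have hnext : x < a (i+1) := by
    by_contra hc
    push_neg at hc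
    exact Nat.findGreatest_is_greatest (P := fun i => a i ≤ x) (n := p)
      (Nat.lt_succ_of_le (le_refl i)) (by omega) hc
  obtain ⟨lam, beta, hlam, hform⟩ := hpiece i hilt
  exact ⟨(lam, beta), hlam, a (i+1) - x, by linarith,
    fun y hy1 hy2 => hform y ⟨le_trans hPi hy1, by simpa using lt_of_lt_of_le hy2 (by linarith)⟩⟩

lemma exists_lg {f : ℝ → ℝ} (hf : IsAIET f) {x : ℝ} (hx : x ∈ Set.Ioc (0:ℝ) 1) :
    ∃ g, IsLg f x g := by
  classical
  obtain ⟨p, a, hp, h0, h1, hmono, hpiece⟩ := hf.piecewise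
  set i := Nat.findGreatest (fun i => a i < x) p with hi
  have hPi : a i < x := Nat.findGreatest_spec (P := fun i => a i < x) (Nat.zero_le p)
    (show a 0 < x by rw [h0]; exact hx.1)
  have hip : i ≤ p := Nat.findGreatest_le p
  have hilt : i < p := by
    rcases lt_or_eq_of_le hip with h | he
    · exact h
    · exfalso; have : a p < x := by rw [← he]; exact hPi
      rw [h1] at this; linarith [hx.2]
  have hnext : x ≤ a (i+1) := by
    by_contra hc
    push_neg at hc
    exact Nat.findGreatest_is_greatest (P := fun i => a i < x) (n := p)
      (Nat.lt_succ_of_le (le_refl i)) (by omega) hc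
  obtain ⟨lam, beta, hlam, hform⟩ := hpiece i hilt
  exact ⟨(lam, beta), hlam, x - a i, by linarith,
    fun y hy1 hy2 => hform y ⟨by linarith, by linarith⟩⟩

/-- The set of points of `(0,1)` where `f` has no matching two-sided affine germ. -/
def Bad (f : ℝ → ℝ) : Set ℝ :=
  {y ∈ Set.Ioo (0:ℝ) 1 | ¬∃ g, IsRg f y g ∧ IsLg f y g}

lemma two_sided_of_notMem_Bad {f : ℝ → ℝ} {y : ℝ} (hy : y ∈ Set.Ioo (0:ℝ) 1)
    (h : y ∉ Bad f) : ∃ g, IsRg f y g ∧ IsLg f y g := by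
  rw [Bad, Set.mem_sep_iff] at h
  push_neg at h
  exact h hy

lemma finite_Bad {f : ℝ → ℝ} (hf : IsAIET f) : (Bad f).Finite := by
  classical
  obtain ⟨p, a, hp, h0, h1, hmono, hpiece⟩ := hf.piecewise
  apply Set.Finite.subset ((Set.finite_Iic p).image a)
  rintro y ⟨hy, hbad⟩
  by_contra hniy
  apply hbad
  set i := Nat.findGreatest (fun i => a i ≤ y) p with hi
  have hPi : a i ≤ y := Nat.findGreatest_spec (P := fun i => a i ≤ y) (Nat.zero_le p)
    (show a 0 ≤ y by rw [h0]; exact le_of_lt hy.1)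
  have hip : i ≤ p := Nat.findGreatest_le p
  have hilt : i < p := by
    rcases lt_or_eq_of_le hip with h | he
    · exact h
    · exfalso; have : a p ≤ y := by rw [← he]; exact hPi
      rw [h1] at this; linarith [hy.2]
  have hnext : y < a (i+1) := by
    by_contra hc
    push_neg at hc
    exact Nat.findGreatest_is_greatest (P := fun i => a i ≤ y) (n := p)
      (Nat.lt_succ_of_le (le_refl i)) (by omega) hc
  have hPlt : a i < y := by
    rcases lt_or_eq_of_le hPi with h | he
    · exact h
    · exact absurd ⟨i, Set.mem_Iic.mpr hip, he⟩ hniy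
  obtain ⟨lam, beta, hlam, hform⟩ := hpiece i hilt
  refine ⟨(lam, beta), ⟨hlam, a (i+1) - y, by linarith,
      fun z hz1 hz2 => hform z ⟨le_trans hPi hz1, by simpa using lt_of_lt_of_le hz2 (by linarith)⟩⟩,
    ⟨hlam, y - a i, by linarith, fun z hz1 hz2 => hform z ⟨by linarith, by linarith⟩⟩⟩

lemma germ_inv_r (e : Equiv.Perm ℝ) {y : ℝ} {g : ℝ × ℝ}
    (hr : IsRg (⇑e) y g) : IsRg (⇑e⁻¹) (e y) (g.1⁻¹, -g.2/g.1) := by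
  obtain ⟨hp, δ, hδ, H⟩ := hr
  have hey : e y = ev g y := H y le_rfl (by linarith)
  refine ⟨by positivity, g.1 * δ, by positivity, fun z hz1 hz2 => ?_⟩
  have hne : g.1 ≠ 0 := ne_of_gt hp
  set w := g.1⁻¹ * z + -g.2/g.1 with hw
  have hevw : ev g w = z := by rw [ev, hw]; field_simp; ring
  have h2 : g.1 * (w - y) = z - (g.1 * y + g.2) := by rw [hw]; field_simp; ring
  rw [hey, ev] at hz1 hz2
  have hw1 : y ≤ w := by nlinarith [h2]
  have hw2 : w < y + δ := by nlinarith [h2]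
  have hew : e w = z := by rw [H w hw1 hw2, hevw]
  have : (⇑e⁻¹) z = w := by rw [← hew]; simp
  rw [this, hw, ev]

lemma germ_inv_l (e : Equiv.Perm ℝ) {y : ℝ} {g : ℝ × ℝ}
    (hr : IsRg (⇑e) y g) (hl : IsLg (⇑e) y g) : IsLg (⇑e⁻¹) (e y) (g.1⁻¹, -g.2/g.1) := by
  obtain ⟨hp, δ, hδ, H⟩ := hl
  have hey : e y = ev g y := hr.apply
  refine ⟨by positivity, g.1 * δ, by positivity, fun z hz1 hz2 => ?_⟩
  have hne : g.1 ≠ 0 := ne_of_gt hp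
  set w := g.1⁻¹ * z + -g.2/g.1 with hw
  have hevw : ev g w = z := by rw [ev, hw]; field_simp; ring
  have h2 : g.1 * (y - w) = (g.1 * y + g.2) - z := by rw [hw]; field_simp; ring
  rw [hey, ev] at hz1 hz2
  have hw1 : y - δ < w := by nlinarith [h2]
  have hw2 : w < y := by nlinarith [h2]
  have hew : e w = z := by rw [H w hw1 hw2, hevw]
  have : (⇑e⁻¹) z = w := by rw [← hew]; simp
  rw [this, hw, ev]

lemma bijOn_inv (e : Equiv.Perm ℝ) (he : Set.BijOn (⇑e) (Set.Ico (0:ℝ) 1) (Set.Ico 0 1)) :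
    Set.BijOn (⇑e⁻¹) (Set.Ico (0:ℝ) 1) (Set.Ico 0 1) :=
  Set.BijOn.symm ⟨fun x _ => by simp, fun x _ => by simp⟩ he

lemma Bad_inv_subset (e : Equiv.Perm ℝ) (he : IsAIET ⇑e) :
    Bad (⇑e⁻¹) ⊆ ⇑e '' ({0} ∪ Bad ⇑e) := by
  intro u hu
  obtain ⟨huIoo, hubad⟩ := hu
  by_contra hc
  set y := (⇑e⁻¹) u with hy
  have huIco : u ∈ Set.Ico (0:ℝ) 1 := ⟨le_of_lt huIoo.1, huIoo.2⟩
  have hyIco : y ∈ Set.Ico (0:ℝ) 1 := (bijOn_inv e he.bijOn).mapsTo huIco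
  have heyu : e y = u := by rw [hy]; simp
  have hyni : y ∉ ({0} ∪ Bad ⇑e : Set ℝ) := fun hmem => hc ⟨y, hmem, heyu⟩
  have hy0 : y ≠ 0 := fun h => hyni (Set.mem_union_left _ (by rw [h]; rfl))
  have hyIoo : y ∈ Set.Ioo (0:ℝ) 1 := ⟨lt_of_le_of_ne hyIco.1 (Ne.symm hy0), hyIco.2⟩
  obtain ⟨g, hgr, hgl⟩ := two_sided_of_notMem_Bad hyIoo
    (fun h => hyni (Set.mem_union_right _ h))
  apply hubad
  refine ⟨(g.1⁻¹, -g.2/g.1), ?_, ?_⟩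
  · rw [← heyu]; exact germ_inv_r e hgr
  · rw [← heyu]; exact germ_inv_l e hgr hgl

lemma IsLg.ev_mem {f : ℝ → ℝ} (hf : IsAIET f) {x : ℝ} {g : ℝ × ℝ}
    (hx : x ∈ Set.Ioc (0:ℝ) 1) (h : IsLg f x g) : ev g x ∈ Set.Ioc (0:ℝ) 1 := by
  obtain ⟨hp, δ, hδ, H⟩ := h
  set ε := min δ x with hε
  have hεδ : ε ≤ δ := min_le_left δ x
  have hεx : ε ≤ x := min_le_right δ x
  have hε0 : 0 < ε := lt_min hδ hx.1
  have hy0 : ∀ y, x - ε < y → y < x → f y ∈ Set.Ico (0:ℝ) 1 := by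
    intro y h1 h2
    exact hf.bijOn.mapsTo ⟨by linarith, by linarith [hx.2]⟩
  have hfy : ∀ y, x - ε < y → y < x → f y = ev g y := by
    intro y h1 h2
    exact H y (by linarith) h2
  constructor
  · have h1 := hy0 (x-ε/2) (by linarith) (by linarith)
    have h2 := hfy (x-ε/2) (by linarith) (by linarith)
    have h3 : ev g (x-ε/2) < ev g x := by simp only [ev]; nlinarith
    have h4 := h1.1
    rw [h2] at h4
    linarith
  · by_contra hc
    push_neg at hc
    set η := min ε ((ev g x - 1)/g.1) with hη
    have hη0 : 0 < η := lt_min hε0 (div_pos (by linarith) hp)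
    have hηε : η ≤ ε := min_le_left _ _
    have h1 := hy0 (x - η/2) (by linarith) (by linarith)
    have h2 := hfy (x - η/2) (by linarith) (by linarith)
    have h3 : ev g (x - η/2) = ev g x - g.1*(η/2) := by simp only [ev]; ring
    have hb : g.1 * η ≤ ev g x - 1 := by
      have h5 : η ≤ (ev g x - 1)/g.1 := min_le_right _ _
      rw [le_div_iff₀ hp] at h5
      linarith [h5]
    have h6 := h1.2
    rw [h2] at h6
    nlinarith

open Classical in
def rg (f : ℝ → ℝ) (y : ℝ) : ℝ × ℝ := if h : ∃ g, IsRg f y g then h.choose else (1,0)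

open Classical in
def lg (f : ℝ → ℝ) (y : ℝ) : ℝ × ℝ := if h : ∃ g, IsLg f y g then h.choose else (1,0)

lemma rg_spec {f : ℝ → ℝ} {y : ℝ} (h : ∃ g, IsRg f y g) : IsRg f y (rg f y) := by
  classical
  rw [rg]
  rw [dif_pos h]
  exact h.choose_spec

lemma lg_spec {f : ℝ → ℝ} {y : ℝ} (h : ∃ g, IsLg f y g) : IsLg f y (lg f y) := by
  classical
  rw [lg]
  rw [dif_pos h]
  exact h.choose_spec

/-- Right germ sequence of the iterates at `x`. -/
def Rseq (f : ℝ → ℝ) (x : ℝ) : ℕ → ℝ × ℝ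
  | 0 => (1,0)
  | n+1 => cp (rg f (ev (Rseq f x n) x)) (Rseq f x n)

/-- Left germ sequence of the iterates at `x`. -/
def Lseq (f : ℝ → ℝ) (x : ℝ) : ℕ → ℝ × ℝ
  | 0 => (1,0)
  | n+1 => cp (lg f (ev (Lseq f x n) x)) (Lseq f x n)

/-- Interior break points of `f`, via the canonical germs. -/
def Bset (F : ℝ → ℝ) : Set ℝ := {y ∈ Set.Ioo (0:ℝ) 1 | lg F y ≠ rg F y}

lemma Bset_subset_Bad {F : ℝ → ℝ} : Bset F ⊆ Bad F := by
  rintro y ⟨hy, hne⟩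
  refine ⟨hy, fun ⟨g, hgr, hgl⟩ => hne ?_⟩
  rw [(lg_spec ⟨g, hgl⟩).unique hgl, (rg_spec ⟨g, hgr⟩).unique hgr]

lemma finite_Bset {F : ℝ → ℝ} (hf : IsAIET F) : (Bset F).Finite :=
  (finite_Bad hf).subset Bset_subset_Bad

lemma coe_pow_succ (f : Equiv.Perm ℝ) (n : ℕ) : (⇑(f^(n+1)) : ℝ → ℝ) = ⇑f ∘ ⇑(f^n) := by
  ext z
  rw [pow_succ']
  rfl

lemma coe_pow_succ' (f : Equiv.Perm ℝ) (n : ℕ) : (⇑(f^(n+1)) : ℝ → ℝ) = ⇑(f^n) ∘ ⇑f := by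
  ext z
  rw [pow_succ]
  rfl

lemma seq_invariant (f : Equiv.Perm ℝ) (hf : IsAIET ⇑f) {x : ℝ} (hx : x ∈ Set.Ioo (0:ℝ) 1) (n : ℕ) :
    IsRg (⇑(f^n)) x (Rseq (⇑f) x n) ∧ (⇑(f^n)) x = ev (Rseq (⇑f) x n) x ∧
    (⇑(f^n)) x ∈ Set.Ico (0:ℝ) 1 ∧
    IsLg (⇑(f^n)) x (Lseq (⇑f) x n) ∧ ev (Lseq (⇑f) x n) x ∈ Set.Ioc (0:ℝ) 1 := by
  induction n with
  | zero =>
    have hid : (⇑(f^0) : ℝ → ℝ) = id := by ext z; simp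
    rw [hid]
    exact ⟨isRg_id x, by simp [Rseq, ev], ⟨hx.1.le, hx.2⟩, isLg_id x, by simpa [Lseq, ev] using ⟨hx.1, hx.2.le⟩⟩
  | succ n ih =>
    obtain ⟨h1, h2, h3, h4, h5⟩ := ih
    have hgr : IsRg (⇑f) (ev (Rseq (⇑f) x n) x) (rg (⇑f) (ev (Rseq (⇑f) x n) x)) :=
      rg_spec (exists_rg hf (h2 ▸ h3))
    have hgl : IsLg (⇑f) (ev (Lseq (⇑f) x n) x) (lg (⇑f) (ev (Lseq (⇑f) x n) x)) :=
      lg_spec (exists_lg hf h5)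
    have hR : IsRg (⇑(f^(n+1))) x (Rseq (⇑f) x (n+1)) := by
      rw [coe_pow_succ]
      exact h1.comp hgr
    have hL : IsLg (⇑(f^(n+1))) x (Lseq (⇑f) x (n+1)) := by
      rw [coe_pow_succ]
      exact h4.comp hgl
    refine ⟨hR, hR.apply, ?_, hL, ?_⟩
    · rw [coe_pow_succ]
      exact hf.bijOn.mapsTo h3
    · show ev (cp (lg (⇑f) (ev (Lseq (⇑f) x n) x)) (Lseq (⇑f) x n)) x ∈ Set.Ioc (0:ℝ) 1
      rw [ev_cp]
      exact hgl.ev_mem hf h5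

lemma mem_BP_iff (f : Equiv.Perm ℝ) (hf : IsAIET ⇑f) {x : ℝ} (hx : x ∈ Set.Ioo (0:ℝ) 1) (n : ℕ) :
    x ∈ BP (⇑(f^n)) ↔ Lseq (⇑f) x n ≠ Rseq (⇑f) x n := by
  obtain ⟨h1, h2, h3, h4, h5⟩ := seq_invariant f hf hx n
  constructor
  · intro hmem
    intro heq
    exact notMem_BP hx h1 (heq ▸ h4) hmem
  · intro hne
    exact mem_BP hx h1 h4 hne

lemma step_eq (f : Equiv.Perm ℝ) (hf : IsAIET ⇑f) {x : ℝ} (hx : x ∈ Set.Ioo (0:ℝ) 1) (n : ℕ)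
    (heq : Lseq (⇑f) x n = Rseq (⇑f) x n) (hB : (⇑(f^n)) x ∉ Bset (⇑f)) :
    Lseq (⇑f) x (n+1) = Rseq (⇑f) x (n+1) := by
  obtain ⟨h1, h2, h3, h4, h5⟩ := seq_invariant f hf hx n
  have hc : ev (Lseq (⇑f) x n) x = (⇑(f^n)) x := by rw [heq, ← h2]
  have hcI : (⇑(f^n)) x ∈ Set.Ioo (0:ℝ) 1 := by
    refine ⟨?_, h3.2⟩
    rw [← hc]
    exact h5.1
  have hlr : lg (⇑f) ((⇑(f^n)) x) = rg (⇑f) ((⇑(f^n)) x) := by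
    by_contra hne
    exact hB ⟨hcI, hne⟩
  show cp (lg (⇑f) (ev (Lseq (⇑f) x n) x)) (Lseq (⇑f) x n)
      = cp (rg (⇑f) (ev (Rseq (⇑f) x n) x)) (Rseq (⇑f) x n)
  rw [heq, ← h2, hlr]

/-- If `x` is a break point of `f^n` then its orbit hits `Bset` before time `n`. -/
lemma exists_orbit_break (f : Equiv.Perm ℝ) (hf : IsAIET ⇑f) {x : ℝ} (hx : x ∈ Set.Ioo (0:ℝ) 1)
    (n : ℕ) (hne : Lseq (⇑f) x n ≠ Rseq (⇑f) x n) :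
    ∃ m < n, (⇑(f^m)) x ∈ Bset (⇑f) := by
  induction n with
  | zero => exact absurd rfl hne
  | succ n ih =>
    by_cases h : Lseq (⇑f) x n = Rseq (⇑f) x n
    · by_cases hB : (⇑(f^n)) x ∈ Bset (⇑f)
      · exact ⟨n, Nat.lt_succ_self n, hB⟩
      · exact absurd (step_eq f hf hx n h hB) hne
    · obtain ⟨m, hm, hmB⟩ := ih h
      exact ⟨m, Nat.lt_succ_of_lt hm, hmB⟩

lemma transfer (f : Equiv.Perm ℝ) (hf : IsAIET ⇑f) {x : ℝ} (hx : x ∈ Set.Ioo (0:ℝ) 1)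
    (hxB : x ∉ Bset (⇑f)) (hfx : (⇑f) x ∈ Set.Ioo (0:ℝ) 1) (n : ℕ) :
    (Lseq (⇑f) x (n+1) = Rseq (⇑f) x (n+1)) ↔ (Lseq (⇑f) (f x) n = Rseq (⇑f) (f x) n) := by
  have hgr : IsRg (⇑f) x (rg (⇑f) x) := rg_spec (exists_rg hf ⟨hx.1.le, hx.2⟩)
  have hgl : IsLg (⇑f) x (lg (⇑f) x) := lg_spec (exists_lg hf ⟨hx.1, hx.2.le⟩)
  have hlr : lg (⇑f) x = rg (⇑f) x := by
    by_contra hne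
    exact hxB ⟨hx, hne⟩
  have hslope : (rg (⇑f) x).1 ≠ 0 := ne_of_gt hgr.1
  obtain ⟨k1, k2, k3, k4, k5⟩ := seq_invariant f hf hfx n
  obtain ⟨m1, -, -, m4, -⟩ := seq_invariant f hf hx (n+1)
  have hevr : ev (rg (⇑f) x) x = (⇑f) x := hgr.apply.symm
  have hdecR : Rseq (⇑f) x (n+1) = cp (Rseq (⇑f) ((⇑f) x) n) (rg (⇑f) x) := by
    apply m1.unique
    have hbase : IsRg (⇑(f^n)) (ev (rg (⇑f) x) x) (Rseq (⇑f) ((⇑f) x) n) := by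
      rw [hevr]; exact k1
    have := hgr.comp hbase
    rwa [← coe_pow_succ'] at this
  have hdecL : Lseq (⇑f) x (n+1) = cp (Lseq (⇑f) ((⇑f) x) n) (lg (⇑f) x) := by
    apply m4.unique
    have hbase : IsLg (⇑(f^n)) (ev (lg (⇑f) x) x) (Lseq (⇑f) ((⇑f) x) n) := by
      rw [hlr, hevr]; exact k4
    have := hgl.comp hbase
    rwa [← coe_pow_succ'] at this
  constructor
  · intro h
    rw [hdecR, hdecL, hlr] at h
    exact cp_cancel hslope h
  · intro h
    rw [hdecR, hdecL, hlr, h]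

/-- A letter: an AIET or the inverse of one. -/
def GoodLetter (t : Equiv.Perm ℝ) : Prop := IsAIET ⇑t ∨ IsAIET ⇑t⁻¹

lemma GoodLetter.mapsTo {t : Equiv.Perm ℝ} (h : GoodLetter t) :
    Set.MapsTo ⇑t (Set.Ico (0:ℝ) 1) (Set.Ico (0:ℝ) 1) := by
  rcases h with h | h
  · exact h.bijOn.mapsTo
  · have := (bijOn_inv t⁻¹ h.bijOn).mapsTo
    simpa using this

lemma GoodLetter.finite_Bad' {t : Equiv.Perm ℝ} (h : GoodLetter t) : (Bad ⇑t).Finite := by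
  rcases h with h | h
  · exact finite_Bad h
  · have hsub := Bad_inv_subset t⁻¹ h
    simp only [inv_inv] at hsub
    exact (((Set.finite_singleton (0:ℝ)).union (finite_Bad h)).image _).subset hsub

lemma prod_mapsTo (l : List (Equiv.Perm ℝ)) (h : ∀ t ∈ l, GoodLetter t) :
    Set.MapsTo (⇑l.prod) (Set.Ico (0:ℝ) 1) (Set.Ico (0:ℝ) 1) := by
  induction l with
  | nil => intro x hx; simpa using hx
  | cons t l ih =>
    intro x hx
    have h1 : (⇑(t :: l).prod : ℝ → ℝ) x = t (l.prod x) := by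
      rw [List.prod_cons]; rfl
    rw [h1]
    exact (h t (List.mem_cons_self)).mapsTo
      (ih (fun s hs => h s (List.mem_cons_of_mem t hs)) hx)

/-- Cumulative bad set of a word. -/
def BadW : List (Equiv.Perm ℝ) → Set ℝ
  | [] => ∅
  | t :: l => BadW l ∪ (⇑l.prod) ⁻¹' ({0} ∪ Bad ⇑t)

lemma perm_preimage_finite (e : Equiv.Perm ℝ) {s : Set ℝ} (hs : s.Finite) :
    ((⇑e) ⁻¹' s).Finite := by
  rw [← Equiv.image_symm_eq_preimage]
  exact hs.image _

lemma perm_preimage_ncard (e : Equiv.Perm ℝ) (s : Set ℝ) :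
    ((⇑e) ⁻¹' s).ncard = s.ncard := by
  rw [← Equiv.image_symm_eq_preimage]
  exact Set.ncard_image_of_injective s (Equiv.injective _)

lemma badW_finite (l : List (Equiv.Perm ℝ)) (h : ∀ t ∈ l, GoodLetter t) : (BadW l).Finite := by
  induction l with
  | nil => simp [BadW]
  | cons t l ih =>
    refine Set.Finite.union (ih (fun s hs => h s (List.mem_cons_of_mem t hs))) ?_
    exact perm_preimage_finite _ ((Set.finite_singleton 0).union
      ((h t (List.mem_cons_self)).finite_Bad'))

lemma badW_ncard (l : List (Equiv.Perm ℝ)) (K : ℕ)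
    (hK : ∀ t ∈ l, (Bad ⇑t).ncard + 1 ≤ K) : (BadW l).ncard ≤ K * l.length := by
  induction l with
  | nil => simp [BadW]
  | cons t l ih =>
    have h1 : (BadW (t :: l)).ncard ≤ (BadW l).ncard + ((⇑l.prod) ⁻¹' ({0} ∪ Bad ⇑t)).ncard :=
      Set.ncard_union_le _ _
    have h2 : ((⇑l.prod) ⁻¹' ({0} ∪ Bad ⇑t)).ncard ≤ 1 + (Bad ⇑t).ncard := by
      rw [perm_preimage_ncard]
      calc ({0} ∪ Bad ⇑t : Set ℝ).ncard ≤ ({0} : Set ℝ).ncard + (Bad ⇑t).ncard :=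
        Set.ncard_union_le _ _
        _ = 1 + (Bad ⇑t).ncard := by rw [Set.ncard_singleton]
    have h3 := ih (fun s hs => hK s (List.mem_cons_of_mem t hs))
    have h4 := hK t (List.mem_cons_self)
    calc (BadW (t :: l)).ncard ≤ K * l.length + (1 + (Bad ⇑t).ncard) := by
          have := le_trans h1 (Nat.add_le_add h3 h2); exact this
      _ ≤ K * l.length + K := by omega
      _ = K * (t :: l).length := by rw [List.length_cons]; ring

lemma germ_of_notMem_BadW (l : List (Equiv.Perm ℝ)) (h : ∀ t ∈ l, GoodLetter t)
    {x : ℝ} (hx : x ∈ Set.Ioo (0:ℝ) 1) (hB : x ∉ BadW l) :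
    ∃ G, IsRg (⇑l.prod) x G ∧ IsLg (⇑l.prod) x G := by
  induction l with
  | nil =>
    refine ⟨(1,0), ?_, ?_⟩
    · have : (⇑(List.prod ([] : List (Equiv.Perm ℝ))) : ℝ → ℝ) = id := by
        simp
      rw [this]; exact isRg_id x
    · have : (⇑(List.prod ([] : List (Equiv.Perm ℝ))) : ℝ → ℝ) = id := by
        simp
      rw [this]; exact isLg_id x
  | cons t l ih =>
    have hB1 : x ∉ BadW l := fun hc => hB (Set.mem_union_left _ hc)
    have hB2 : x ∉ (⇑l.prod) ⁻¹' ({0} ∪ Bad ⇑t) := fun hc => hB (Set.mem_union_right _ hc)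
    obtain ⟨G, hGr, hGl⟩ := ih (fun s hs => h s (List.mem_cons_of_mem t hs)) hB1
    set y := (⇑l.prod) x with hy
    have hyIco : y ∈ Set.Ico (0:ℝ) 1 :=
      prod_mapsTo l (fun s hs => h s (List.mem_cons_of_mem t hs)) ⟨hx.1.le, hx.2⟩
    have hyev : y = ev G x := hGr.apply
    have hy0 : y ≠ 0 := fun hc => hB2 (Set.mem_union_left _ (by rw [← hc] at *; exact rfl))
    have hyIoo : y ∈ Set.Ioo (0:ℝ) 1 := ⟨lt_of_le_of_ne hyIco.1 (Ne.symm hy0), hyIco.2⟩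
    obtain ⟨g, hgr, hgl⟩ := two_sided_of_notMem_Bad hyIoo
      (fun hc => hB2 (Set.mem_union_right _ hc))
    have hcomp : (⇑(t :: l).prod : ℝ → ℝ) = ⇑t ∘ ⇑l.prod := by
      rw [List.prod_cons]; rfl
    refine ⟨cp g G, ?_, ?_⟩
    · rw [hcomp]
      exact hGr.comp (by rw [← hyev]; exact hgr)
    · rw [hcomp]
      exact hGl.comp (by rw [← hyev]; exact hgl)

lemma BP_prod_subset (l : List (Equiv.Perm ℝ)) (h : ∀ t ∈ l, GoodLetter t) :
    BP (⇑l.prod) ⊆ {0} ∪ BadW l := by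
  intro x hx
  by_contra hc
  rw [Set.mem_union] at hc
  push_neg at hc
  obtain ⟨hx0, hxB⟩ := hc
  have hxIoo : x ∈ Set.Ioo (0:ℝ) 1 := by
    rcases hx with h0 | hrest
    · exact absurd h0 hx0
    · exact hrest.1
  obtain ⟨G, hGr, hGl⟩ := germ_of_notMem_BadW l h hxIoo hxB
  exact notMem_BP hxIoo hGr hGl hx

lemma BP_word_bound (l : List (Equiv.Perm ℝ)) (h : ∀ t ∈ l, GoodLetter t) (K : ℕ)
    (hK : ∀ t ∈ l, (Bad ⇑t).ncard + 1 ≤ K) :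
    (BP (⇑l.prod)).Finite ∧ (BP (⇑l.prod)).ncard ≤ 1 + K * l.length := by
  have hfin : ({0} ∪ BadW l : Set ℝ).Finite :=
    (Set.finite_singleton 0).union (badW_finite l h)
  constructor
  · exact hfin.subset (BP_prod_subset l h)
  · calc (BP (⇑l.prod)).ncard ≤ ({0} ∪ BadW l : Set ℝ).ncard :=
        Set.ncard_le_ncard (BP_prod_subset l h) hfin
      _ ≤ ({0} : Set ℝ).ncard + (BadW l).ncard := Set.ncard_union_le _ _
      _ ≤ 1 + K * l.length := by
          rw [Set.ncard_singleton]
          exact Nat.add_le_add_left (badW_ncard l K hK) 1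

lemma exists_word (S : Finset (Equiv.Perm ℝ)) (g : Equiv.Perm ℝ)
    (hg : g ∈ Subgroup.closure (S : Set (Equiv.Perm ℝ))) :
    ∃ l : List (Equiv.Perm ℝ), (∀ x ∈ l, x ∈ S ∨ x⁻¹ ∈ S) ∧ l.prod = g ∧
      l.length = wordLength S g := by
  have h2 : g ∈ Submonoid.closure ((S : Set (Equiv.Perm ℝ)) ∪ (S : Set (Equiv.Perm ℝ))⁻¹) := by
    rw [← Subgroup.closure_toSubmonoid]
    exact hg
  obtain ⟨l0, hl0, hprod⟩ := Submonoid.exists_list_of_mem_closure h2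
  have hne : {n : ℕ | ∃ w : Fin n → Equiv.Perm ℝ,
      (∀ i, w i ∈ S ∨ (w i)⁻¹ ∈ S) ∧ (List.ofFn w).prod = g}.Nonempty := by
    refine ⟨l0.length, fun i => l0.get i, fun i => ?_, by rw [List.ofFn_get]; exact hprod⟩
    rcases hl0 _ (List.get_mem l0 i) with h | h
    · exact Or.inl h
    · exact Or.inr (by simpa using h)
  obtain ⟨w, hw, hwp⟩ := Nat.sInf_mem hne
  refine ⟨List.ofFn w, ?_, hwp, by rw [List.length_ofFn]; rfl⟩
  intro x hxmem
  rw [List.mem_ofFn] at hxmem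
  obtain ⟨i, rfl⟩ := hxmem
  exact hw i

lemma ncard_Iio_nat (m : ℕ) : (Set.Iio m).ncard = m := by
  rw [show Set.Iio m = ↑(Finset.Iio m) by ext k; simp, Set.ncard_coe_finset, Nat.card_Iio]

lemma ncard_Iic_nat (m : ℕ) : (Set.Iic m).ncard = m + 1 := by
  rw [show Set.Iic m = ↑(Finset.Iic m) by ext k; simp, Set.ncard_coe_finset, Nat.card_Iic]

lemma ncard_biUnion_le {α β : Type*} (s : Finset α) (t : α → Set β) :
    (⋃ a ∈ s, t a).ncard ≤ ∑ a ∈ s, (t a).ncard := by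
  classical
  induction s using Finset.induction_on with
  | empty => simp
  | insert a s hnotmem ih =>
    rw [Finset.sum_insert hnotmem, Finset.set_biUnion_insert]
    exact le_trans (Set.ncard_union_le _ _) (Nat.add_le_add_left ih _)

lemma exists_boundary {P : ℕ → Prop} : ∀ {b a : ℕ}, a < b → ¬P a → P b →
    ∃ k, a ≤ k ∧ ¬P k ∧ P (k+1) := by
  intro b
  induction b with
  | zero => intro a h; omega
  | succ b ih =>
    intro a hab ha hb
    by_cases hPb : P b
    · rcases Nat.lt_or_ge a b with h | h
      · exact ih h ha hPb
      · have : a = b := by omega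
        exact ⟨a, le_rfl, ha, by rw [this]; exact hb⟩
    · exact ⟨b, by omega, hPb, hb⟩

lemma bp_pow_bound (f : Equiv.Perm ℝ) (S : Finset (Equiv.Perm ℝ)) (hS : ∀ g ∈ S, IsAIET ⇑g)
    (hfS : f ∈ Subgroup.closure (S : Set (Equiv.Perm ℝ))) :
    ∃ K : ℕ, ∀ n : ℕ, (BP ⇑(f^n)).Finite ∧ (BP ⇑(f^n)).ncard ≤ 1 + K * wordLength S (f^n) := by
  classical
  set K := S.sup (fun s => ((Bad ⇑s).ncard + (Bad ⇑(s⁻¹)).ncard) + 1) with hKdef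
  refine ⟨K, fun n => ?_⟩
  have hgn : f^n ∈ Subgroup.closure (S : Set (Equiv.Perm ℝ)) := Subgroup.pow_mem _ hfS n
  obtain ⟨l, hl, hlp, hlen⟩ := exists_word S (f^n) hgn
  have hgood : ∀ t ∈ l, GoodLetter t := by
    intro t ht
    rcases hl t ht with h | h
    · exact Or.inl (hS t h)
    · exact Or.inr (hS _ h)
  have hKb : ∀ t ∈ l, (Bad ⇑t).ncard + 1 ≤ K := by
    intro t ht
    have hsup : ∀ u ∈ S, ((Bad ⇑u).ncard + (Bad ⇑(u⁻¹)).ncard) + 1 ≤ K := by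
      intro u hu
      rw [hKdef]
      exact Finset.le_sup (f := fun s : Equiv.Perm ℝ => ((Bad ⇑s).ncard + (Bad ⇑(s⁻¹)).ncard) + 1) hu
    rcases hl t ht with h | h
    · have := hsup t h
      omega
    · have := hsup t⁻¹ h
      have he : (Bad ⇑t).ncard = (Bad ⇑(t⁻¹⁻¹)).ncard := by rw [inv_inv]
      omega
  have hres := BP_word_bound l hgood K hKb
  rw [hlp, hlen] at hres
  exact hres

lemma pow_apply_inv_pow (f : Equiv.Perm ℝ) (m : ℕ) (y : ℝ) : (⇑(f^m)) ((⇑(f⁻¹^m)) y) = y := by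
  rw [inv_pow]; exact Equiv.apply_symm_apply (f^m) y

lemma inv_pow_succ_apply (f : Equiv.Perm ℝ) (m : ℕ) (y : ℝ) :
    (⇑(f⁻¹^(m+1))) y = (⇑f⁻¹) ((⇑(f⁻¹^m)) y) := by
  rw [pow_succ']; rfl

lemma f_apply_inv_pow_succ (f : Equiv.Perm ℝ) (m : ℕ) (y : ℝ) :
    (⇑f) ((⇑(f⁻¹^(m+1))) y) = (⇑(f⁻¹^m)) y := by
  rw [inv_pow_succ_apply]; exact Equiv.apply_symm_apply f _

lemma inv_pow_add_apply (f : Equiv.Perm ℝ) (a b : ℕ) (y : ℝ) :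
    (⇑(f⁻¹^(a+b))) y = (⇑(f⁻¹^b)) ((⇑(f⁻¹^a)) y) := by
  rw [add_comm a b, pow_add]; rfl

lemma periodic_z (f : Equiv.Perm ℝ) {p : ℕ} {z : ℝ} (h : (⇑(f^p)) z = z) :
    (⇑(f⁻¹^p)) z = z := by
  have h2 := Equiv.symm_apply_apply (f^p) z
  rw [h] at h2
  rw [inv_pow]
  exact h2

lemma linear_growth_of_unbounded (f : Equiv.Perm ℝ) (hf : IsAIET ⇑f)
    (hfin : ∀ n, (BP ⇑(f^n)).Finite)
    (hub : ∀ C : ℕ, ∃ n, C < (BP ⇑(f^n)).ncard) :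
    ∃ K : ℕ, ∀ n, n ≤ (BP ⇑(f^n)).ncard + K := by
  classical
  have hBfin : (Bset ⇑f).Finite := finite_Bset hf
  set BF := hBfin.toFinset with hBF
  set ρ : ℝ → ℕ → ℝ := fun c m => (⇑(f⁻¹^m)) c with hρ
  have hρ_Ico : ∀ c, c ∈ Set.Ico (0:ℝ) 1 → ∀ m, ρ c m ∈ Set.Ico (0:ℝ) 1 := by
    intro c hc m
    induction m with
    | zero => show (⇑(f⁻¹^0)) c ∈ _; rw [pow_zero]; exact hc
    | succ m ih =>
      have he : ρ c (m+1) = (⇑f⁻¹) (ρ c m) := inv_pow_succ_apply f m c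
      rw [he]
      exact (bijOn_inv f hf.bijOn).mapsTo ih
  have hray : ∀ n x, x ∈ BP ⇑(f^n) → x ≠ 0 → ∃ c ∈ BF, ∃ m < n, x = ρ c m := by
    intro n x hx hx0
    have hxIoo : x ∈ Set.Ioo (0:ℝ) 1 := by
      rcases hx with h0 | hrest
      · exact absurd h0 hx0
      · exact hrest.1
    have hne := (mem_BP_iff f hf hxIoo n).1 hx
    obtain ⟨m, hm, hmB⟩ := exists_orbit_break f hf hxIoo n hne
    refine ⟨(⇑(f^m)) x, hBfin.mem_toFinset.mpr hmB, m, hm, ?_⟩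
    show x = (⇑(f⁻¹^m)) ((⇑(f^m)) x)
    rw [inv_pow]
    exact (Equiv.symm_apply_apply (f^m) x).symm
  set cnt : ℝ → ℕ → ℕ := fun c n => ((fun m => ρ c m) '' Set.Iio n ∩ BP ⇑(f^n)).ncard with hcnt
  have hcount : ∀ n, (BP ⇑(f^n)).ncard ≤ 1 + ∑ c ∈ BF, cnt c n := by
    intro n
    have hsub : BP ⇑(f^n) ⊆
        {(0:ℝ)} ∪ ⋃ c ∈ BF, ((fun m => ρ c m) '' Set.Iio n ∩ BP ⇑(f^n)) := by
      intro x hx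
      by_cases hx0 : x = 0
      · exact Set.mem_union_left _ (by rw [hx0]; rfl)
      · obtain ⟨c, hc, m, hm, hxm⟩ := hray n x hx hx0
        exact Set.mem_union_right _ (Set.mem_biUnion hc ⟨⟨m, hm, hxm.symm⟩, hx⟩)
    have hfin2 : ({(0:ℝ)} ∪ ⋃ c ∈ BF, ((fun m => ρ c m) '' Set.Iio n ∩ BP ⇑(f^n))).Finite := by
      refine (Set.finite_singleton 0).union ?_
      exact Set.Finite.biUnion BF.finite_toSet
        (fun c _ => (hfin n).subset Set.inter_subset_right)
    have h1 := Set.ncard_le_ncard hsub hfin2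
    have h2 := Set.ncard_union_le ({(0:ℝ)})
      (⋃ c ∈ BF, ((fun m => ρ c m) '' Set.Iio n ∩ BP ⇑(f^n)))
    have h3 : (⋃ c ∈ BF, ((fun m => ρ c m) '' Set.Iio n ∩ BP ⇑(f^n))).ncard ≤
        ∑ c ∈ BF, cnt c n :=
      ncard_biUnion_le BF _
    rw [Set.ncard_singleton] at h2
    omega
  have hchoice : ∃ c ∈ BF, ∀ C : ℕ, ∃ n, C < cnt c n := by
    by_contra hcon
    push_neg at hcon
    choose g hg using hcon
    obtain ⟨n, hn⟩ := hub (1 + ∑ c ∈ BF.attach, g c.1 c.2)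
    have hnle := hcount n
    have hsum : ∑ c ∈ BF, cnt c n ≤ ∑ c ∈ BF.attach, g c.1 c.2 := by
      rw [← Finset.sum_attach BF (fun c => cnt c n)]
      exact Finset.sum_le_sum (fun c _ => hg c.1 c.2 n)
    omega
  obtain ⟨c, hcBF, hcu⟩ := hchoice
  have hcB : c ∈ Bset ⇑f := hBfin.mem_toFinset.mp hcBF
  have hcIoo : c ∈ Set.Ioo (0:ℝ) 1 := hcB.1
  have hinj : Function.Injective (ρ c) := by
    have key : ∀ a b : ℕ, a < b → ρ c a = ρ c b → False := by
      intro a b hab heq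
      set p := b - a with hpdef
      have hppos : 0 < p := by omega
      have h1 : (⇑(f^a)) (ρ c a) = c := pow_apply_inv_pow f a c
      have h2 : (⇑(f^a)) (ρ c b) = (⇑(f⁻¹^p)) c := by
        have hb : ρ c b = (⇑(f⁻¹^a)) ((⇑(f⁻¹^p)) c) := by
          show (⇑(f⁻¹^b)) c = _
          rw [show b = p + a by omega, inv_pow_add_apply]
        rw [hb]
        exact pow_apply_inv_pow f a _
      have hper : (⇑(f⁻¹^p)) c = c := by rw [← h2, ← heq, h1]
      have hperk : ∀ k, ρ c (k+p) = ρ c k := by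
        intro k
        show (⇑(f⁻¹^(k+p))) c = (⇑(f⁻¹^k)) c
        rw [show k + p = p + k by omega, inv_pow_add_apply, hper]
      have hrange : ∀ k, ρ c k ∈ (fun m => ρ c m) '' Set.Iio p := by
        intro k
        induction k using Nat.strong_induction_on with
        | _ k ih =>
          by_cases hk : k < p
          · exact ⟨k, hk, rfl⟩
          · have hk2 : k = (k - p) + p := by omega
            rw [hk2, hperk]
            exact ih (k-p) (by omega)
      obtain ⟨n, hn⟩ := hcu p
      have hle : cnt c n ≤ p := by
        have hsub2 : (fun m => ρ c m) '' Set.Iio n ∩ BP ⇑(f^n) ⊆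
            (fun m => ρ c m) '' Set.Iio p := by
          rintro x ⟨⟨m2, -, rfl⟩, -⟩
          exact hrange m2
        calc cnt c n ≤ ((fun m => ρ c m) '' Set.Iio p).ncard :=
            Set.ncard_le_ncard hsub2 ((Set.finite_Iio p).image _)
          _ ≤ (Set.Iio p).ncard := Set.ncard_image_le (Set.finite_Iio p)
          _ = p := ncard_Iio_nat p
      omega
    intro a b hab
    by_contra hne
    rcases Nat.lt_or_ge a b with h | h
    · exact key a b h hab
    · exact key b a (by omega) hab.symm
  have hhit : ((ρ c) ⁻¹' (Bset ⇑f ∪ {0})).Finite :=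
    Set.Finite.preimage hinj.injOn (hBfin.union (Set.finite_singleton 0))
  obtain ⟨J0, hJ0⟩ := hhit.bddAbove
  set J := J0 + 1 with hJdef
  have hJ : ∀ m, J ≤ m → ρ c m ∉ Bset ⇑f ∧ ρ c m ≠ 0 := by
    intro m hm
    constructor
    · intro hc2
      have : m ≤ J0 := hJ0 (Set.mem_preimage.mpr (Set.mem_union_left _ hc2))
      omega
    · intro hc2
      have : m ≤ J0 := hJ0 (Set.mem_preimage.mpr (Set.mem_union_right _ (by rw [hc2]; rfl)))
      omega
  set z := ρ c J with hz
  have hzIoo_all : ∀ m, J ≤ m → ρ c m ∈ Set.Ioo (0:ℝ) 1 := by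
    intro m hm
    have h1 := hρ_Ico c ⟨hcIoo.1.le, hcIoo.2⟩ m
    exact ⟨lt_of_le_of_ne h1.1 (Ne.symm (hJ m hm).2), h1.2⟩
  have hzIoo : z ∈ Set.Ioo (0:ℝ) 1 := hzIoo_all J le_rfl
  have htr : ∀ i n, (Lseq (⇑f) (ρ c (J+i)) (n+i) = Rseq (⇑f) (ρ c (J+i)) (n+i)) ↔
      (Lseq (⇑f) z n = Rseq (⇑f) z n) := by
    intro i
    induction i with
    | zero => intro n; exact Iff.rfl
    | succ i ih =>
      intro n
      have hx : ρ c (J+i+1) ∈ Set.Ioo (0:ℝ) 1 := hzIoo_all _ (by omega)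
      have hxB : ρ c (J+i+1) ∉ Bset (⇑f) := (hJ _ (by omega)).1
      have hfx : (⇑f) (ρ c (J+i+1)) = ρ c (J+i) := f_apply_inv_pow_succ f (J+i) c
      have hfxIoo : (⇑f) (ρ c (J+i+1)) ∈ Set.Ioo (0:ℝ) 1 := by
        rw [hfx]; exact hzIoo_all _ (by omega)
      have ht := transfer f hf hx hxB hfxIoo (n+i)
      rw [hfx] at ht
      rw [show n + (i+1) = (n+i)+1 by omega, show J + (i+1) = (J+i)+1 by omega]
      exact ht.trans (ih n)
  set T := {k : ℕ | Lseq (⇑f) z k ≠ Rseq (⇑f) z k} with hT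
  have hTinf : T.Infinite := by
    by_contra hcon0
    rw [Set.not_infinite] at hcon0
    have hTfin : T.Finite := hcon0
    obtain ⟨n, hn⟩ := hcu ((J+1) + T.ncard)
    have hbound : cnt c n ≤ (J+1) + T.ncard := by
      have himg : (fun m => ρ c m) '' Set.Iio n ∩ BP ⇑(f^n)
          = (fun m => ρ c m) '' {m | m < n ∧ ρ c m ∈ BP ⇑(f^n)} := by
        ext x
        constructor
        · rintro ⟨⟨m2, hm2, rfl⟩, hxBP⟩
          exact ⟨m2, ⟨hm2, hxBP⟩, rfl⟩
        · rintro ⟨m2, ⟨hm2, hxBP⟩, rfl⟩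
          exact ⟨⟨m2, hm2, rfl⟩, hxBP⟩
      have hSsub : {m | m < n ∧ ρ c m ∈ BP ⇑(f^n)} ⊆
          Set.Iio (J+1) ∪ (fun k => J + (n - k)) '' (T ∩ Set.Iic n) := by
        rintro m ⟨hmn, hmBP⟩
        by_cases hmJ : m < J + 1
        · exact Set.mem_union_left _ hmJ
        · have hiJ : J ≤ m := by omega
          set i := m - J with hidef
          have him : m = J + i := by omega
          have hbrk : Lseq (⇑f) (ρ c m) n ≠ Rseq (⇑f) (ρ c m) n :=
            (mem_BP_iff f hf (hzIoo_all m hiJ) n).1 hmBP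
          have hkey := htr i (n - i)
          rw [show (n-i)+i = n by omega, ← him] at hkey
          have hzBrk : n - i ∈ T := fun he => hbrk (hkey.2 he)
          exact Set.mem_union_right _ ⟨n - i, ⟨hzBrk, Set.mem_Iic.mpr (by omega)⟩,
            by show J + (n - (n - i)) = m; omega⟩
      have hc1 : cnt c n = {m | m < n ∧ ρ c m ∈ BP ⇑(f^n)}.ncard := by
        show ((fun m => ρ c m) '' Set.Iio n ∩ BP ⇑(f^n)).ncard = _
        rw [himg]
        exact Set.ncard_image_of_injective _ hinj
      have hc2 : {m | m < n ∧ ρ c m ∈ BP ⇑(f^n)}.ncard ≤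
          (Set.Iio (J+1) ∪ (fun k => J + (n-k)) '' (T ∩ Set.Iic n)).ncard :=
        Set.ncard_le_ncard hSsub ((Set.finite_Iio _).union
          ((hTfin.subset Set.inter_subset_left).image _))
      have hc3 := Set.ncard_union_le (Set.Iio (J+1)) ((fun k => J + (n-k)) '' (T ∩ Set.Iic n))
      have hc4 : ((fun k => J + (n-k)) '' (T ∩ Set.Iic n)).ncard ≤ T.ncard := by
        calc ((fun k => J + (n-k)) '' (T ∩ Set.Iic n)).ncard ≤ (T ∩ Set.Iic n).ncard :=
            Set.ncard_image_le (hTfin.subset Set.inter_subset_left)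
          _ ≤ T.ncard := Set.ncard_le_ncard Set.inter_subset_left hTfin
      rw [ncard_Iio_nat] at hc3
      omega
    omega
  have hcof : ∃ K₀, ∀ k, K₀ ≤ k → Lseq (⇑f) z k ≠ Rseq (⇑f) z k := by
    by_contra hcon
    push_neg at hcon
    have hCr : ∀ N : ℕ, ∃ k, N ≤ k ∧ (⇑(f^k)) z ∈ Bset (⇑f) := by
      intro N
      obtain ⟨k₀, hk₀N, hk₀⟩ := hcon N
      obtain ⟨k₁, hk₁T, hk₁gt⟩ := hTinf.exists_gt k₀
      obtain ⟨k, hk1, hk2, hk3⟩ := exists_boundary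
        (P := fun k => Lseq (⇑f) z k ≠ Rseq (⇑f) z k) hk₁gt (not_not.mpr hk₀) hk₁T
      refine ⟨k, le_trans hk₀N hk1, ?_⟩
      by_contra hkB
      exact hk3 (step_eq f hf hzIoo k (not_not.mp hk2) hkB)
    set Cr := {k : ℕ | (⇑(f^k)) z ∈ Bset (⇑f)} with hCrdef
    have hCrInf : Cr.Infinite := by
      apply Set.infinite_of_forall_exists_gt
      intro a
      obtain ⟨k, hk1, hk2⟩ := hCr (a+1)
      exact ⟨k, hk2, by omega⟩
    obtain ⟨k, hkCr, k', hk'Cr, hkne, hkeq⟩ := hCrInf.exists_ne_map_eq_of_mapsTo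
      (f := fun k => (⇑(f^k)) z) (fun k hk => hk) hBfin
    have hper2 : ∀ a b : ℕ, a < b → (⇑(f^a)) z = (⇑(f^b)) z → False := by
      intro a b hab heq2
      set p := b - a with hpdef
      have hppos : 0 < p := by omega
      have hfpz : (⇑(f^p)) z = z := by
        have h1 : (⇑(f^b)) z = (⇑(f^a)) ((⇑(f^p)) z) := by
          rw [show b = a + p by omega, pow_add]; rfl
        rw [h1] at heq2
        exact ((f^a).injective heq2).symm
      have hinvp : (⇑(f⁻¹^p)) z = z := periodic_z f hfpz
      have hcon2 : ρ c (J + p) = ρ c J := by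
        show (⇑(f⁻¹^(J+p))) c = (⇑(f⁻¹^J)) c
        rw [inv_pow_add_apply]
        exact hinvp
      have := hinj hcon2
      omega
    rcases Nat.lt_or_ge k k' with h | h
    · exact hper2 k k' h hkeq
    · exact hper2 k' k (by omega) hkeq.symm
  obtain ⟨K₀, hK₀⟩ := hcof
  refine ⟨K₀ + J + 1, fun n => ?_⟩
  by_cases hn : n ≤ K₀ + J + 1
  · omega
  · push_neg at hn
    have hD : (fun i => ρ c (J + i)) '' Set.Iic (n - K₀ - J - 1) ⊆ BP ⇑(f^n) := by
      rintro x ⟨i, hi, rfl⟩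
      rw [Set.mem_Iic] at hi
      have hbz : Lseq (⇑f) z (n - i) ≠ Rseq (⇑f) z (n - i) := hK₀ _ (by omega)
      have hkey := htr i (n - i)
      rw [show (n-i)+i = n by omega] at hkey
      exact (mem_BP_iff f hf (hzIoo_all _ (by omega)) n).2 (fun he => hbz (hkey.1 he))
    have hcard : ((fun i => ρ c (J+i)) '' Set.Iic (n - K₀ - J - 1)).ncard
        = n - K₀ - J - 1 + 1 := by
      rw [Set.ncard_image_of_injective _ (fun a b hab => by
        have := hinj hab; omega), ncard_Iic_nat]
    have hfinal := Set.ncard_le_ncard hD (hfin n)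
    rw [hcard] at hfinal
    omega

end AIETproof

theorem stmt_7 (f : Equiv.Perm ℝ) (hf : IsAIET ⇑f)
    (hord : ∀ n : ℕ, 0 < n → f ^ n ≠ 1)
    (S : Finset (Equiv.Perm ℝ)) (hS : ∀ g ∈ S, IsAIET ⇑g)
    (hfS : f ∈ Subgroup.closure (S : Set (Equiv.Perm ℝ)))
    (hdist : Filter.Tendsto (fun n : ℕ => (wordLength S (f ^ n) : ℝ) / n)
      Filter.atTop (nhds 0)) :
    ∃ C : ℕ, ∀ n : ℕ, (BP ⇑(f ^ n)).ncard ≤ C := by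
  by_contra hC
  push_neg at hC
  obtain ⟨K, hK⟩ := AIETproof.bp_pow_bound f S hS hfS
  have hfin : ∀ n, (BP ⇑(f^n)).Finite := fun n => (hK n).1
  obtain ⟨K₂, hK₂⟩ := AIETproof.linear_growth_of_unbounded f hf hfin (fun C => hC C)
  have hε : (0:ℝ) < 1 / (2*((K:ℝ)+1)) := by positivity
  have hev : ∀ᶠ n : ℕ in Filter.atTop,
      (wordLength S (f ^ n) : ℝ) / n < 1/(2*((K:ℝ)+1)) :=
    hdist.eventually_lt_const hε
  obtain ⟨N, hN⟩ := Filter.eventually_atTop.1 hev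
  set n := max N (2*K₂ + 2*K + 10) with hndef
  have hn1 : N ≤ n := le_max_left _ _
  have hn2 : 2*K₂ + 2*K + 10 ≤ n := le_max_right _ _
  have hb1 : n ≤ (BP ⇑(f^n)).ncard + K₂ := hK₂ n
  have hb2 : (BP ⇑(f^n)).ncard ≤ 1 + K * wordLength S (f^n) := (hK n).2
  have hw := hN n hn1
  have hnpos : (0:ℝ) < (n:ℝ) := by
    have : 0 < n := by omega
    exact_mod_cast this
  have hl : (wordLength S (f^n) : ℝ) < (n:ℝ) / (2*((K:ℝ)+1)) := by
    rw [div_lt_iff₀ hnpos] at hw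
    rw [div_eq_mul_inv, mul_comm]
    rw [div_eq_mul_inv] at hw
    calc (wordLength S (f^n) : ℝ) < 1 * (2*((K:ℝ)+1))⁻¹ * n := hw
      _ = (2*((K:ℝ)+1))⁻¹ * n := by ring
  have hnat : n ≤ 1 + K * wordLength S (f^n) + K₂ := by omega
  have hcast : (n:ℝ) ≤ 1 + (K:ℝ) * (wordLength S (f^n) : ℝ) + (K₂:ℝ) := by
    exact_mod_cast hnat
  have hKl : (K:ℝ) * (wordLength S (f^n):ℝ) ≤ (n:ℝ)/2 := by
    have h1 : (K:ℝ) * (wordLength S (f^n):ℝ) ≤ (K:ℝ) * ((n:ℝ)/(2*((K:ℝ)+1))) :=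
      mul_le_mul_of_nonneg_left (le_of_lt hl) (Nat.cast_nonneg K)
    have h2 : (K:ℝ) * ((n:ℝ)/(2*((K:ℝ)+1))) = ((n:ℝ) * K)/(2*((K:ℝ)+1)) := by ring
    have h3 : ((n:ℝ) * K)/(2*((K:ℝ)+1)) ≤ (n:ℝ)/2 := by
      rw [div_le_div_iff₀ (by positivity) (by norm_num : (0:ℝ) < 2)]
      nlinarith [Nat.cast_nonneg (α := ℝ) n, Nat.cast_nonneg (α := ℝ) K]
    linarith
  have hfin2 : (n:ℝ) ≤ 2*((K₂:ℝ)+1) := by linarith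
  have hfinal : n ≤ 2*K₂ + 2 := by
    have : (n:ℝ) ≤ ((2*K₂ + 2 : ℕ) : ℝ) := by push_cast; linarith
    exact_mod_cast this
  omega
end
end

section
/- Let f be an AIET, a a break point of f whose orbit contains no periodic points, and assume all break points of f in the orbit of a lie in the segment {a, f(a), ..., f^N(a)}. If the jump Δ_{f^{N+1}}(a)=f^{N+1}_+(a)−f^{N+1}_-(a) is zero, then Δ_{f^{N+l}}(a)=0 for all l≥1; if it is nonzero, then Δ_{f^{N+l}}(a)≠0 for all l≥1. -/
open Set Filter Function MeasureTheory Topology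

noncomputable section

namespace Stmt8Aux

/-- `g` is affine with positive slope on a left neighbourhood of `x`,
with left limit `y`. -/
def LAt (g : ℝ → ℝ) (x y : ℝ) : Prop :=
  ∃ ε > (0:ℝ), ∃ l > (0:ℝ), ∃ b : ℝ,
    y = l * x + b ∧ ∀ t ∈ Set.Ioo (x - ε) x, g t = l * t + b

lemma LAt.congr {g g' : ℝ → ℝ} {x y : ℝ} (h : LAt g x y) (h' : ∀ t, g t = g' t) :
    LAt g' x y := by
  obtain ⟨ε, hε, l, hl, b, hy, hg⟩ := h
  exact ⟨ε, hε, l, hl, b, hy, fun t ht => (h' t) ▸ hg t ht⟩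

lemma affine_tendsto (l b x : ℝ) :
    Tendsto (fun t => l * t + b) (𝓝 x) (𝓝 (l * x + b)) :=
  ((continuous_const.mul continuous_id).add continuous_const).tendsto x

lemma LAt.tendsto_nhds {g : ℝ → ℝ} {x y : ℝ} (h : LAt g x y) :
    Tendsto g (𝓝[<] x) (𝓝 y) := by
  obtain ⟨ε, hε, l, hl, b, hy, hg⟩ := h
  have hmem : Set.Ioo (x - ε) x ∈ 𝓝[<] x :=
    Ioo_mem_nhdsLT_of_mem ⟨by linarith, le_rfl⟩
  have heq : g =ᶠ[𝓝[<] x] fun t => l * t + b :=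
    Filter.eventually_of_mem hmem (fun t ht => hg t ht)
  refine Filter.Tendsto.congr' heq.symm ?_
  rw [hy]
  exact (affine_tendsto l b x).mono_left nhdsWithin_le_nhds

lemma LAt.leftLim_eq {g : ℝ → ℝ} {x y : ℝ} (h : LAt g x y) :
    Function.leftLim g x = y :=
  leftLim_eq_of_tendsto h.tendsto_nhds

lemma LAt.comp {g h : ℝ → ℝ} {x y z : ℝ} (hg : LAt g x y) (hh : LAt h y z) :
    LAt (fun t => h (g t)) x z := by
  obtain ⟨ε, hε, l, hl, b, hy, hgg⟩ := hg
  obtain ⟨ε', hε', l', hl', b', hz, hhh⟩ := hh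
  refine ⟨min ε (ε' / l), by positivity, l' * l, by positivity, l' * b + b',
    by rw [hz, hy]; ring, fun t ht => ?_⟩
  obtain ⟨ht1, ht2⟩ := ht
  have hm1 : min ε (ε'/l) ≤ ε := min_le_left _ _
  have hm2 : min ε (ε'/l) ≤ ε'/l := min_le_right _ _
  have htg : g t = l * t + b := hgg t ⟨by linarith, ht2⟩
  have h1 : g t < y := by rw [htg, hy]; nlinarith
  have h2 : y - ε' < g t := by
    have hle : l * (ε'/l) = ε' := by field_simp
    rw [htg, hy]; nlinarith
  have h3 := hhh (g t) ⟨h2, h1⟩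
  show h (g t) = l' * l * t + (l' * b + b')
  rw [h3, htg]; ring

/-- Finding the piece whose closure contains `x` from the left. -/
lemma find_left_piece {p : ℕ} {a : ℕ → ℝ} (hp : 0 < p) (h0 : a 0 = 0) (hap : a p = 1)
    (hmono : ∀ i j, i < j → j ≤ p → a i < a j) {x : ℝ} (hx0 : 0 < x) (hx1 : x ≤ 1) :
    ∃ i < p, a i < x ∧ x ≤ a (i + 1) := by
  have key : ∀ m n, n ≤ p → p - n ≤ m → a n < x → ∃ i < p, a i < x ∧ x ≤ a (i + 1) := by
    intro m
    induction m with
    | zero =>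
      intro n hn hpn hax
      have : n = p := by omega
      subst this; rw [hap] at hax; linarith
    | succ m ih =>
      intro n hn hpn hax
      rcases le_or_gt x (a (n + 1)) with h | h
      · have hnp : n < p := by
          rcases Nat.lt_or_ge n p with h' | h'
          · exact h'
          · have : n = p := by omega
            subst this; rw [hap] at hax; linarith
        exact ⟨n, hnp, hax, h⟩
      · have hnp : n < p := by
          rcases Nat.lt_or_ge n p with h' | h'
          · exact h'
          · have : n = p := by omega
            subst this; rw [hap] at hax; linarith
        exact ih (n + 1) hnp (by omega) h
  exact key p 0 (by omega) (by omega) (by rw [h0]; exact hx0)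

/-- Finding the piece containing `x`. -/
lemma find_piece {p : ℕ} {a : ℕ → ℝ} (hp : 0 < p) (h0 : a 0 = 0) (hap : a p = 1)
    (hmono : ∀ i j, i < j → j ≤ p → a i < a j) {x : ℝ} (hx0 : 0 ≤ x) (hx1 : x < 1) :
    ∃ i < p, a i ≤ x ∧ x < a (i + 1) := by
  have key : ∀ m n, n ≤ p → p - n ≤ m → a n ≤ x → ∃ i < p, a i ≤ x ∧ x < a (i + 1) := by
    intro m
    induction m with
    | zero =>
      intro n hn hpn hax
      have : n = p := by omega
      subst this; rw [hap] at hax; linarith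
    | succ m ih =>
      intro n hn hpn hax
      have hnp : n < p := by
        rcases Nat.lt_or_ge n p with h' | h'
        · exact h'
        · have : n = p := by omega
          subst this; rw [hap] at hax; linarith
      rcases lt_or_ge x (a (n + 1)) with h | h
      · exact ⟨n, hnp, hax, h⟩
      · exact ih (n + 1) hnp (by omega) h
  exact key p 0 (by omega) (by omega) (by rw [h0]; exact hx0)

/-- An AIET is left-affine at every point. -/
lemma aiet_lAt {f : ℝ → ℝ} (hf : IsAIET f) (x : ℝ) : ∃ y, LAt f x y := by
  rcases le_or_gt x 0 with hx | hx
  · refine ⟨x, 1, one_pos, 1, one_pos, 0, by ring, fun t ht => ?_⟩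
    have : t ∉ Set.Ico (0:ℝ) 1 := by
      intro ⟨h1, h2⟩; have := ht.2; linarith
    rw [hf.id_outside t this]; ring
  rcases le_or_gt x 1 with hx1 | hx1
  · obtain ⟨p, a, hp, h0, hap, hmono, hpieces⟩ := hf.piecewise
    obtain ⟨i, hip, hax, hxa⟩ := find_left_piece hp h0 hap hmono hx hx1
    obtain ⟨lam, beta, hlam, hfa⟩ := hpieces i hip
    refine ⟨lam * x + beta, x - a i, by linarith, lam, hlam, beta, rfl, fun t ht => ?_⟩
    refine hfa t ⟨by linarith [ht.1], lt_of_lt_of_le ht.2 hxa⟩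
  · refine ⟨x, x - 1, by linarith, 1, one_pos, 0, by ring, fun t ht => ?_⟩
    have : t ∉ Set.Ico (0:ℝ) 1 := by
      intro ⟨h1, h2⟩; have := ht.1; linarith
    rw [hf.id_outside t this]; ring

/-- Powers of an AIET permutation are left-affine at every point. -/
lemma pow_lAt {f : Equiv.Perm ℝ} (hf : IsAIET ⇑f) (k : ℕ) (x : ℝ) :
    ∃ y, LAt (⇑(f ^ k)) x y := by
  induction k generalizing x with
  | zero =>
    refine ⟨x, 1, one_pos, 1, one_pos, 0, by ring, fun t ht => ?_⟩
    simp
  | succ k ih =>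
    obtain ⟨y, hy⟩ := ih x
    obtain ⟨z, hz⟩ := aiet_lAt hf y
    refine ⟨z, (hy.comp hz).congr fun t => ?_⟩
    rw [pow_succ']
    rfl

lemma derivWithin_affine_Ici (l b t : ℝ) :
    derivWithin (fun s => l * s + b) (Set.Ici t) t = l := by
  have h : HasDerivAt (fun s => l * s + b) (l * 1) t :=
    ((hasDerivAt_id t).const_mul l).add_const b
  rw [mul_one] at h
  exact h.hasDerivWithinAt.derivWithin (uniqueDiffOn_Ici t t Set.self_mem_Ici)

/-- At a point of `(0,1)` which is not a break point, `f` is affine with positive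
slope on a two-sided neighbourhood. -/
lemma affine_at_nonBP {f : ℝ → ℝ} (hf : IsAIET f) {v : ℝ} (hv : v ∈ Set.Ioo (0:ℝ) 1)
    (hbp : v ∉ BP f) :
    ∃ ε > (0:ℝ), ∃ l > (0:ℝ), ∃ b : ℝ, ∀ t ∈ Set.Ioo (v - ε) (v + ε), f t = l * t + b := by
  -- continuity data from not being a break point
  have hne : v ≠ 0 := ne_of_gt hv.1
  have hcont : Function.leftLim f v = f v ∧
      Function.leftLim (rightD f) v = rightD f v := by
    by_contra hcon
    refine hbp (Or.inr ⟨hv, ?_⟩)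
    rcases not_and_or.mp hcon with h | h
    · exact Or.inl h
    · exact Or.inr h
  -- left affine data
  obtain ⟨y, ε₁, hε₁, l₁, hl₁, b₁, hy, hleft⟩ := aiet_lAt hf v
  -- right affine data
  obtain ⟨p, a, hp, h0, hap, hmono, hpieces⟩ := hf.piecewise
  obtain ⟨i, hip, hav, hva⟩ := find_piece hp h0 hap hmono (le_of_lt hv.1) hv.2
  obtain ⟨l₂, b₂, hl₂, hright⟩ := hpieces i hip
  set ε₂ := a (i + 1) - v with hε₂def
  have hε₂ : 0 < ε₂ := by simp [hε₂def]; linarith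
  have hrt : ∀ t ∈ Set.Ico v (v + ε₂), f t = l₂ * t + b₂ := fun t ht =>
    hright t ⟨le_trans hav ht.1, by have := ht.2; simp [hε₂def] at this ⊢; linarith⟩
  -- leftLim f v = l₁ v + b₁
  have hLL : Function.leftLim f v = l₁ * v + b₁ :=
    LAt.leftLim_eq ⟨ε₁, hε₁, l₁, hl₁, b₁, rfl, hleft⟩
  -- f v = l₂ v + b₂
  have hfv : f v = l₂ * v + b₂ := hrt v ⟨le_rfl, by linarith⟩
  -- rightD f v = l₂
  have hrdv : rightD f v = l₂ := by
    have hevent : (fun s => l₂ * s + b₂) =ᶠ[𝓝[Set.Ici v] v] f := by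
      refine Filter.eventually_of_mem
        (Ico_mem_nhdsGE (show v < v + ε₂ by linarith)) ?_
      exact fun t ht => (hrt t ht).symm
    have h1 : derivWithin (fun s => l₂ * s + b₂) (Set.Ici v) v
        = derivWithin f (Set.Ici v) v := hevent.derivWithin_eq hfv.symm
    rw [rightD, ← h1, derivWithin_affine_Ici]
  -- rightD f t = l₁ for t in the left interval
  have hrd_left : ∀ t ∈ Set.Ioo (v - ε₁) v, rightD f t = l₁ := by
    intro t ht
    have hevent : f =ᶠ[𝓝 t] fun s => l₁ * s + b₁ := by
      refine Filter.eventually_of_mem (isOpen_Ioo.mem_nhds ht) ?_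
      exact fun s hs => hleft s hs
    have hevent' : f =ᶠ[𝓝[Set.Ici t] t] fun s => l₁ * s + b₁ :=
      hevent.filter_mono nhdsWithin_le_nhds
    rw [rightD, hevent'.derivWithin_eq (hleft t ht)]
    exact derivWithin_affine_Ici l₁ b₁ t
  -- leftLim (rightD f) v = l₁
  have hLLd : Function.leftLim (rightD f) v = l₁ := by
    refine leftLim_eq_of_tendsto ?_
    have hmem : Set.Ioo (v - ε₁) v ∈ 𝓝[<] v :=
      Ioo_mem_nhdsLT_of_mem ⟨by linarith, le_rfl⟩
    refine Filter.Tendsto.congr' ?_ tendsto_const_nhds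
    exact Filter.eventually_of_mem hmem (fun t ht => (hrd_left t ht).symm)
  -- equate slopes and intercepts
  have hl12 : l₁ = l₂ := by rw [← hLLd, hcont.2, hrdv]
  have hb12 : b₁ = b₂ := by
    have := hLL.symm.trans (hcont.1.trans hfv)
    rw [hl12] at this; linarith
  refine ⟨min ε₁ ε₂, lt_min hε₁ hε₂, l₂, hl₂, b₂, fun t ht => ?_⟩
  obtain ⟨ht1, ht2⟩ := ht
  have hm1 : min ε₁ ε₂ ≤ ε₁ := min_le_left _ _
  have hm2 : min ε₁ ε₂ ≤ ε₂ := min_le_right _ _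
  rcases lt_or_ge t v with h | h
  · rw [hleft t ⟨by linarith, h⟩, hl12, hb12]
  · exact hrt t ⟨h, by linarith⟩

/-- If `f` is affine with positive slope near `v`, then `f⁻¹` is left-affine
at `f v` with left limit `v`. -/
lemma inv_lAt {f : Equiv.Perm ℝ} {v ε l b : ℝ} (hε : 0 < ε) (hl : 0 < l)
    (haff : ∀ t ∈ Set.Ioo (v - ε) (v + ε), f t = l * t + b) :
    LAt (⇑f⁻¹) (f v) v := by
  have hfv : f v = l * v + b := haff v ⟨by linarith, by linarith⟩
  have hkey : v = 1 / l * f v + -(b / l) := by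
    rw [hfv]; field_simp; ring
  refine ⟨l * ε, by positivity, 1 / l, by positivity, -(b / l), hkey, fun s hs => ?_⟩
  obtain ⟨hs1, hs2⟩ := hs
  set t := (s - b) / l with htdef
  have hts : l * t + b = s := by
    rw [htdef]; field_simp; ring
  have htv : t < v := by
    rw [htdef]; rw [hfv] at hs2
    rw [div_lt_iff₀ hl]; linarith
  have htv' : v - ε < t := by
    rw [htdef]; rw [hfv] at hs1
    rw [lt_div_iff₀ hl]; nlinarith
  have hft : f t = s := by rw [haff t ⟨htv', by linarith⟩, hts]
  have : (⇑f⁻¹) s = t := by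
    rw [← hft]; exact Equiv.symm_apply_apply f t
  rw [this, htdef]; ring

end Stmt8Aux

theorem stmt_8 (f : Equiv.Perm ℝ) (hf : IsAIET ⇑f) (a : ℝ) (ha : a ∈ BP ⇑f)
    (hnp : ∀ k : ℕ, 0 < k → (f ^ k) a ≠ a) (N : ℕ)
    (hseg : ∀ x ∈ BP ⇑f, (∃ k : ℤ, (f ^ k) a = x) → ∃ k : ℕ, k ≤ N ∧ x = (f ^ k) a) :
    (Δjump ⇑(f ^ (N + 1)) a = 0 → ∀ l : ℕ, 1 ≤ l → Δjump ⇑(f ^ (N + l)) a = 0) ∧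
    (Δjump ⇑(f ^ (N + 1)) a ≠ 0 → ∀ l : ℕ, 1 ≤ l → Δjump ⇑(f ^ (N + l)) a ≠ 0) := by
  classical
  have haI : a ∈ Set.Ico (0:ℝ) 1 := by
    rcases ha with h | h
    · simp only [Set.mem_singleton_iff] at h
      subst h; exact ⟨le_rfl, one_pos⟩
    · exact ⟨le_of_lt h.1.1, h.1.2⟩
  have hpow : ∀ k : ℕ, (f ^ k) a ∈ Set.Ico (0:ℝ) 1 := by
    intro k
    induction k with
    | zero => simpa using haI
    | succ k ih =>
      have h1 : (f ^ (k+1)) a = f ((f ^ k) a) := by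
        rw [pow_succ', Equiv.Perm.mul_apply]
      rw [h1]; exact hf.bijOn.mapsTo ih
  have hnbp : ∀ k : ℕ, N < k → (f ^ k) a ∉ BP ⇑f := by
    intro k hk hmem
    obtain ⟨j, hj, hx⟩ := hseg _ hmem ⟨(k : ℤ), by rw [zpow_natCast]⟩
    have hkj : (f ^ (k - j)) a = a := by
      have h1 : (f ^ k) a = (f ^ j) ((f ^ (k - j)) a) := by
        rw [← Equiv.Perm.mul_apply, ← pow_add]
        congr 2; omega
      have h2 : (f ^ j) ((f ^ (k - j)) a) = (f ^ j) a := by rw [← h1, ← hx]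
      exact (f ^ j).injective h2
    exact hnp (k - j) (by omega) hkj
  have hIoo : ∀ k : ℕ, N < k → (f ^ k) a ∈ Set.Ioo (0:ℝ) 1 := by
    intro k hk
    refine ⟨lt_of_le_of_ne (hpow k).1 ?_, (hpow k).2⟩
    intro h0
    exact hnbp k hk (Set.mem_union_left _ (by simp [← h0]))
  set x₀ : ℝ := if a = 0 then 1 else a with hx₀
  have hdelta : ∀ g : ℝ → ℝ, Δjump g a = g a - Function.leftLim g x₀ := by
    intro g
    by_cases h : a = 0 <;> simp [Δjump, h, hx₀]
  have step : ∀ m : ℕ, N < m →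
      (Δjump ⇑(f ^ m) a = 0 ↔ Δjump ⇑(f ^ (m + 1)) a = 0) := by
    intro m hm
    have hfm := hIoo m hm
    have hfmb := hnbp m hm
    have hsucc : (f ^ (m+1)) a = f ((f ^ m) a) := by
      rw [pow_succ', Equiv.Perm.mul_apply]
    constructor
    · intro h
      rw [hdelta, sub_eq_zero] at h
      obtain ⟨y, hy⟩ := Stmt8Aux.pow_lAt hf m x₀
      have hyval : y = (f ^ m) a := by rw [h, hy.leftLim_eq]
      obtain ⟨w, hw⟩ := Stmt8Aux.aiet_lAt hf y
      have hcomp : Stmt8Aux.LAt (⇑(f ^ (m+1))) x₀ w :=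
        (hy.comp hw).congr (fun t => by rw [pow_succ', Equiv.Perm.mul_apply])
      rw [hdelta, sub_eq_zero, hcomp.leftLim_eq]
      have hny : y ∉ BP ⇑f := hyval ▸ hfmb
      have hyIoo : y ∈ Set.Ioo (0:ℝ) 1 := hyval ▸ hfm
      have hLL : Function.leftLim (⇑f) y = f y := by
        by_contra hne
        exact hny (Set.mem_union_right _ ⟨hyIoo, Or.inl hne⟩)
      rw [hsucc, ← hyval, ← hLL, hw.leftLim_eq]
    · intro h
      rw [hdelta, sub_eq_zero] at h
      obtain ⟨z, hz⟩ := Stmt8Aux.pow_lAt hf (m+1) x₀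
      have hzval : z = (f ^ (m+1)) a := by rw [h, hz.leftLim_eq]
      obtain ⟨ε, hε, l, hl, b, haff⟩ := Stmt8Aux.affine_at_nonBP hf hfm hfmb
      have hinv : Stmt8Aux.LAt (⇑f⁻¹) (f ((f ^ m) a)) ((f ^ m) a) :=
        Stmt8Aux.inv_lAt hε hl haff
      rw [← hsucc, ← hzval] at hinv
      have hcomp : Stmt8Aux.LAt (⇑(f ^ m)) x₀ ((f ^ m) a) := by
        refine (hz.comp hinv).congr (fun t => ?_)
        show (⇑f⁻¹) ((f ^ (m+1)) t) = (f ^ m) t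
        rw [pow_succ', Equiv.Perm.mul_apply, Equiv.Perm.inv_def, Equiv.symm_apply_apply]
      rw [hdelta, sub_eq_zero, hcomp.leftLim_eq]
  have main : ∀ l : ℕ, 1 ≤ l →
      (Δjump ⇑(f ^ (N + l)) a = 0 ↔ Δjump ⇑(f ^ (N + 1)) a = 0) := by
    intro l hl
    induction l with
    | zero => omega
    | succ l ih =>
      rcases Nat.eq_zero_or_pos l with h1 | h1
      · subst h1; exact Iff.rfl
      · exact ((step (N + l) (by omega)).symm).trans (ih h1)
  exact ⟨fun h0 l hl => (main l hl).mpr h0,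
    fun hne l hl h0 => hne ((main l hl).mp h0)⟩
end
end

section
/- Let f be an AIET and a an initial break point of f (so f^{-k}(a)∉BP(f) for all k≥1). Then for every positive integer n and every 0 ≤ k ≤ n−1, the discontinuity jump of f^n at f^{-k}(a) equals the discontinuity jump of f^{n−k} at a: Δ_{f^n}(f^{-k}(a)) = Δ_{f^{n−k}}(a). -/
open Set Filter Function MeasureTheory Topology

noncomputable section

/-- `f` is affine with positive slope on a left neighborhood of `x`, with left value `v`. -/
def LeftAff (f : ℝ → ℝ) (x v : ℝ) : Prop :=
  ∃ lam beta eps : ℝ, 0 < lam ∧ 0 < eps ∧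
    (∀ y ∈ Set.Ioo (x - eps) x, f y = lam * y + beta) ∧ lam * x + beta = v

lemma LeftAff.tendsto {f : ℝ → ℝ} {x v : ℝ} (h : LeftAff f x v) :
    Tendsto f (𝓝[<] x) (𝓝 v) := by
  obtain ⟨lam, beta, eps, hlam, heps, hfy, hv⟩ := h
  have hmem : Set.Ioo (x - eps) x ∈ 𝓝[<] x :=
    Ioo_mem_nhdsLT_of_mem ⟨by linarith, le_refl x⟩
  have htd : Tendsto (fun y => lam * y + beta) (𝓝[<] x) (𝓝 v) := by
    rw [← hv]
    exact (((continuous_const.mul continuous_id).add continuous_const).tendsto x).mono_left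
      nhdsWithin_le_nhds
  exact htd.congr' (Filter.eventuallyEq_of_mem hmem fun y hy => (hfy y hy).symm)

lemma LeftAff.leftLim_eq {f : ℝ → ℝ} {x v : ℝ} (h : LeftAff f x v) :
    Function.leftLim f x = v :=
  leftLim_eq_of_tendsto h.tendsto

lemma LeftAff.comp {f g : ℝ → ℝ} {x v w : ℝ} (hf : LeftAff f x v) (hg : LeftAff g v w) :
    LeftAff (g ∘ f) x w := by
  obtain ⟨lam, beta, eps, hlam, heps, hfy, hv⟩ := hf
  obtain ⟨lam', beta', eps', hlam', heps', hgy, hw⟩ := hg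
  refine ⟨lam' * lam, lam' * beta + beta', min eps (eps' / lam), by positivity,
    lt_min heps (by positivity), ?_, by rw [← hw, ← hv]; ring⟩
  intro y hy
  have hy1 : x - eps < y := lt_of_le_of_lt (by simp [min_le_left]; linarith [min_le_left eps (eps'/lam)]) hy.1
  have hy2 : y < x := hy.2
  have hfy' : f y = lam * y + beta := hfy y ⟨by
    have := min_le_left eps (eps' / lam); linarith [hy.1], hy2⟩
  have hmem : f y ∈ Set.Ioo (v - eps') v := by
    rw [hfy', ← hv]
    constructor
    · have h1 : x - eps' / lam < y := by
        have := min_le_right eps (eps' / lam); linarith [hy.1]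
      have h2 : (x - y) * lam < eps' := (lt_div_iff₀ hlam).mp (by linarith)
      nlinarith
    · nlinarith
  calc (g ∘ f) y = g (f y) := rfl
    _ = lam' * (f y) + beta' := hgy _ hmem
    _ = lam' * lam * y + (lam' * beta + beta') := by rw [hfy']; ring

lemma IsAIET.leftAff {f : ℝ → ℝ} (hf : IsAIET f) {x : ℝ} (hx0 : 0 < x) (hx1 : x ≤ 1) :
    ∃ v, LeftAff f x v ∧ 0 < v ∧ v ≤ 1 := by
  obtain ⟨p, aa, hp, ha0, hap, hmono, hpiece⟩ := hf.piecewise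
  set s : Finset ℕ := (Finset.range p).filter (fun i => aa i < x) with hs
  have h0s : 0 ∈ s := by
    simp only [hs, Finset.mem_filter, Finset.mem_range]
    exact ⟨hp, by rw [ha0]; exact hx0⟩
  have hne : s.Nonempty := ⟨0, h0s⟩
  set i := s.max' hne with hi
  have his : i ∈ s := s.max'_mem hne
  have hip : i < p := Finset.mem_range.mp (Finset.mem_filter.mp his).1
  have hai : aa i < x := (Finset.mem_filter.mp his).2
  have hub : x ≤ aa (i + 1) := by
    by_contra h
    push_neg at h
    have hi1p : i + 1 < p := by
      rcases Nat.lt_or_ge (i + 1) p with h' | h'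
      · exact h'
      · exfalso
        have hEq : i + 1 = p := le_antisymm hip h'
        rw [hEq, hap] at h; linarith
    have hmem : i + 1 ∈ s := Finset.mem_filter.mpr ⟨Finset.mem_range.mpr hi1p, h⟩
    have := s.le_max' _ hmem
    omega
  have hai0 : 0 ≤ aa i := by
    rcases Nat.eq_zero_or_pos i with h | h
    · rw [h, ha0]
    · rw [← ha0]; exact (hmono 0 i h hip.le).le
  obtain ⟨lam, beta, hlam, haff⟩ := hpiece i hip
  have haff' : ∀ y ∈ Set.Ioo (x - (x - aa i)) x, f y = lam * y + beta := by
    intro y hy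
    have : y ∈ Set.Ico (aa i) (aa (i + 1)) := ⟨by linarith [hy.1], lt_of_lt_of_le hy.2 hub⟩
    exact haff y this
  have hLA : LeftAff f x (lam * x + beta) :=
    ⟨lam, beta, x - aa i, hlam, by linarith, haff', rfl⟩
  refine ⟨lam * x + beta, hLA, ?_, ?_⟩
  · -- positivity of the left value
    set y₀ := (aa i + x) / 2 with hy₀
    have hy₀mem : y₀ ∈ Set.Ioo (x - (x - aa i)) x := ⟨by simp [hy₀]; linarith, by simp [hy₀]; linarith⟩
    have hy₀Ico : y₀ ∈ Set.Ico (0:ℝ) 1 := ⟨by simp [hy₀]; linarith, by simp [hy₀]; linarith⟩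
    have hfy₀ : f y₀ ∈ Set.Ico (0:ℝ) 1 := hf.bijOn.mapsTo hy₀Ico
    have : f y₀ = lam * y₀ + beta := haff' y₀ hy₀mem
    rw [this] at hfy₀
    nlinarith [hfy₀.1, hy₀mem.2]
  · -- v ≤ 1 via limits
    have hev : ∀ᶠ y in 𝓝[<] x, f y ≤ 1 := by
      have hmem : Set.Ioo (aa i) x ∈ 𝓝[<] x := Ioo_mem_nhdsLT_of_mem ⟨hai, le_refl x⟩
      refine Filter.eventually_of_mem hmem fun y hy => ?_
      have : y ∈ Set.Ico (0:ℝ) 1 := ⟨by linarith [hy.1], by linarith [hy.2]⟩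
      exact (hf.bijOn.mapsTo this).2.le
    exact le_of_tendsto hLA.tendsto hev

lemma IsAIET.leftAff_iterate {f : ℝ → ℝ} (hf : IsAIET f) (m : ℕ) :
    ∀ x : ℝ, 0 < x → x ≤ 1 → ∃ v, LeftAff (f^[m]) x v ∧ 0 < v ∧ v ≤ 1 := by
  induction m with
  | zero =>
    intro x hx0 hx1
    exact ⟨x, ⟨1, 0, 1, one_pos, one_pos, by intro y _; simp, by ring⟩, hx0, hx1⟩
  | succ m ih =>
    intro x hx0 hx1
    obtain ⟨v, hv, hv0, hv1⟩ := hf.leftAff hx0 hx1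
    obtain ⟨w, hw, hw0, hw1⟩ := ih v hv0 hv1
    exact ⟨w, by rw [Function.iterate_succ]; exact hv.comp hw, hw0, hw1⟩

lemma key_step {f : Equiv.Perm ℝ} (hf : IsAIET ⇑f) {x : ℝ} (hx : x ∈ Set.Ioo (0:ℝ) 1)
    (hc : Function.leftLim ⇑f x = f x) (m : ℕ) :
    Δjump ((⇑f)^[m + 1]) x = Δjump ((⇑f)^[m]) (f x) := by
  obtain ⟨v, hv, hv0, hv1⟩ := hf.leftAff hx.1 hx.2.le
  have hfx : (f : ℝ → ℝ) x = v := by rw [← hc, hv.leftLim_eq]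
  obtain ⟨w, hw, hw0, hw1⟩ := hf.leftAff_iterate m v hv0 hv1
  have hcomp : LeftAff ((⇑f)^[m + 1]) x w := by
    rw [Function.iterate_succ]; exact hv.comp hw
  have h1 : Function.leftLim ((⇑f)^[m + 1]) x = w := hcomp.leftLim_eq
  have h2 : Function.leftLim ((⇑f)^[m]) (f x) = w := by rw [hfx]; exact hw.leftLim_eq
  have hx0 : x ≠ 0 := ne_of_gt hx.1
  have hfx0 : (f : ℝ → ℝ) x ≠ 0 := by rw [hfx]; exact ne_of_gt hv0
  rw [Δjump, Δjump, if_neg hx0, if_neg hfx0, h1, h2, Function.iterate_succ_apply]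

theorem stmt_9 (f : Equiv.Perm ℝ) (hf : IsAIET ⇑f) (a : ℝ) (ha : a ∈ BP ⇑f)
    (hinit : ∀ k : ℕ, 1 ≤ k → (f⁻¹ ^ k) a ∉ BP ⇑f) :
    ∀ n k : ℕ, 1 ≤ n → k ≤ n - 1 →
      Δjump ⇑(f ^ n) ((f⁻¹ ^ k) a) = Δjump ⇑(f ^ (n - k)) a := by
  have haIco : a ∈ Set.Ico (0:ℝ) 1 := by
    rcases ha with h | h
    · rw [Set.mem_singleton_iff] at h; rw [h]; exact ⟨le_refl 0, one_pos⟩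
    · exact ⟨h.1.1.le, h.1.2⟩
  have hinv : ∀ y : ℝ, y ∈ Set.Ico (0:ℝ) 1 → f⁻¹ y ∈ Set.Ico (0:ℝ) 1 := by
    intro y hy
    by_contra h
    have h2 : (f : ℝ → ℝ) (f⁻¹ y) = f⁻¹ y := hf.id_outside _ h
    rw [show ∀ z, f (f⁻¹ z) = z from f.apply_symm_apply] at h2
    exact h (h2 ▸ hy)
  have hIco : ∀ k : ℕ, (f⁻¹ ^ k) a ∈ Set.Ico (0:ℝ) 1 := by
    intro k
    induction k with
    | zero => simpa using haIco
    | succ k ih =>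
      rw [pow_succ', Equiv.Perm.mul_apply]
      exact hinv _ ih
  have hcont : ∀ k : ℕ, 1 ≤ k → (f⁻¹ ^ k) a ∈ Set.Ioo (0:ℝ) 1 ∧
      Function.leftLim ⇑f ((f⁻¹ ^ k) a) = f ((f⁻¹ ^ k) a) := by
    intro k hk
    have hnb := hinit k hk
    have hico := hIco k
    have hne0 : (f⁻¹ ^ k) a ≠ 0 := by
      intro h
      exact hnb (Or.inl (by rw [Set.mem_singleton_iff]; exact h))
    have hioo : (f⁻¹ ^ k) a ∈ Set.Ioo (0:ℝ) 1 :=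
      ⟨lt_of_le_of_ne hico.1 (Ne.symm hne0), hico.2⟩
    refine ⟨hioo, ?_⟩
    by_contra h
    exact hnb (Or.inr ⟨hioo, Or.inl h⟩)
  intro n k hn hk
  induction k generalizing n with
  | zero => simp
  | succ k ih =>
    obtain ⟨m, rfl⟩ : ∃ m, n = m + 1 := ⟨n - 1, by omega⟩
    have hx := hcont (k + 1) (by omega)
    have hfx : (f : ℝ → ℝ) ((f⁻¹ ^ (k + 1)) a) = (f⁻¹ ^ k) a := by
      rw [pow_succ', Equiv.Perm.mul_apply, show ∀ z, f (f⁻¹ z) = z from f.apply_symm_apply]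
    calc Δjump ⇑(f ^ (m + 1)) ((f⁻¹ ^ (k + 1)) a)
        = Δjump ((⇑f)^[m + 1]) ((f⁻¹ ^ (k + 1)) a) := rfl
      _ = Δjump ((⇑f)^[m]) ((f⁻¹ ^ k) a) := by rw [key_step hf hx.1 hx.2 m, hfx]
      _ = Δjump ⇑(f ^ m) ((f⁻¹ ^ k) a) := rfl
      _ = Δjump ⇑(f ^ (m - k)) a := ih m (by omega) (by omega)
      _ = Δjump ⇑(f ^ (m + 1 - (k + 1))) a := by rw [Nat.succ_sub_succ]
end
end

section
/- Let Λ be a free abelian multiplicative subgroup of the positive reals with basis α_1,...,α_s, and let B be an AIET with two slopes λ_1,λ_2 ∈ Λ as above (slopes λ_1 on [0,a), λ_2 on [a,1), a=B^{-1}(0)), topologically conjugate to an irrational rotation R_ρ. Write λ_1=∏α_j^{β_j}, λ_2=∏α_j^{δ_j}, and let 𝒩_j(λ) denote the exponent of α_j. If (λ_1,λ_2)≠(1,1), then there exist j∈{1,...,s} and x∈[0,1) such that 𝒩_j(D_+B^n(x))/n converges to ρ(δ_j−β_j)+β_j, which is nonzero. -/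
open Set Filter Function MeasureTheory Topology

noncomputable section

lemma find_idx (p : ℕ) (aa : ℕ → ℝ) (x : ℝ) (h0 : aa 0 ≤ x) (hp : x < aa p) :
    ∃ i < p, aa i ≤ x ∧ x < aa (i+1) := by
  induction p with
  | zero => linarith
  | succ n ih =>
    by_cases hx : aa n ≤ x
    · exact ⟨n, Nat.lt_succ_self n, hx, hp⟩
    · obtain ⟨i, hi, hh⟩ := ih (lt_of_not_ge hx)
      exact ⟨i, hi.trans n.lt_succ_self, hh⟩

lemma rightD_of_affine {f : ℝ → ℝ} {x u lam c : ℝ} (hu : x < u)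
    (hf : ∀ y ∈ Set.Ico x u, f y = lam * y + c) : rightD f x = lam := by
  have h1 : f =ᶠ[nhdsWithin x (Set.Ici x)] fun y => lam * y + c := by
    filter_upwards [inter_mem_nhdsWithin (Set.Ici x) (Iio_mem_nhds hu)] with y hy
    exact hf y ⟨hy.1, hy.2⟩
  rw [rightD, h1.derivWithin_eq (hf x ⟨le_refl x, hu⟩)]
  have := (((hasDerivWithinAt_id x (Set.Ici x)).const_mul lam).add_const c).derivWithin
    (uniqueDiffOn_Ici x x Set.self_mem_Ici)
  simpa using this

lemma floor_tendsto (ρ : ℝ) :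
    Filter.Tendsto (fun n : ℕ => (⌊(n:ℝ) * ρ⌋ : ℝ) / n) Filter.atTop (nhds ρ) := by
  have hfr : Filter.Tendsto (fun n : ℕ => Int.fract ((n:ℝ) * ρ) / n) Filter.atTop (nhds 0) := by
    apply squeeze_zero (fun n => div_nonneg (Int.fract_nonneg _) (Nat.cast_nonneg n))
      (g := fun n : ℕ => 1 / (n:ℝ))
    · intro n
      rcases Nat.eq_zero_or_pos n with rfl | hn
      · simp
      · exact (div_le_div_iff_of_pos_right (show (0:ℝ) < n from Nat.cast_pos.2 hn)).2
          (Int.fract_lt_one _).le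
    · exact tendsto_one_div_atTop_nhds_zero_nat
  have h2 : Filter.Tendsto (fun n : ℕ => ρ - Int.fract ((n:ℝ) * ρ) / n) Filter.atTop
      (nhds (ρ - 0)) := tendsto_const_nhds.sub hfr
  rw [sub_zero] at h2
  apply h2.congr'
  filter_upwards [Filter.eventually_ge_atTop 1] with n hn
  have hne : (n:ℝ) ≠ 0 := Nat.cast_ne_zero.2 (by omega)
  field_simp
  rw [mul_comm ρ (n:ℝ), Int.self_sub_fract]

theorem stmt_13 (s : ℕ) (α : Fin s → ℝ) (hα : ∀ j, 0 < α j)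
    (hfree : Function.Injective fun e : Fin s → ℤ => ∏ j, α j ^ e j)
    (B : ℝ → ℝ) (hB : IsAIET B) (a lam₁ lam₂ : ℝ)
    (ha : a ∈ Set.Ioo (0:ℝ) 1) (hBa : B a = 0)
    (hs1 : ∀ x ∈ Set.Ico (0:ℝ) a, rightD B x = lam₁)
    (hs2 : ∀ x ∈ Set.Ico a 1, rightD B x = lam₂)
    (β δ : Fin s → ℤ) (hlam₁ : lam₁ = ∏ j, α j ^ β j) (hlam₂ : lam₂ = ∏ j, α j ^ δ j)
    (ρ : ℝ) (hρ : Irrational ρ) (hρ01 : ρ ∈ Set.Ioo (0:ℝ) 1)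
    (h : ℝ → ℝ) (hbij : Set.BijOn h (Set.Ico 0 1) (Set.Ico 0 1))
    (hcont : ContinuousOn h (Set.Ico 0 1)) (hmono : StrictMonoOn h (Set.Ico 0 1))
    (hconj : ∀ x ∈ Set.Ico (0:ℝ) 1, h (B x) = Int.fract (h x + ρ))
    (hnontriv : (lam₁, lam₂) ≠ (1, 1)) :
    ∃ (j : Fin s) (x : ℝ), x ∈ Set.Ico (0:ℝ) 1 ∧
      ∃ e : ℕ → Fin s → ℤ,
        (∀ n : ℕ, rightD (B^[n]) x = ∏ k, α k ^ e n k) ∧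
        Filter.Tendsto (fun n : ℕ => (e n j : ℝ) / n) Filter.atTop
          (nhds (ρ * ((δ j : ℝ) - (β j : ℝ)) + (β j : ℝ))) ∧
        ρ * ((δ j : ℝ) - (β j : ℝ)) + (β j : ℝ) ≠ 0 := by
  classical
  have hl1 : 0 < lam₁ := by
    rw [hlam₁]; exact Finset.prod_pos fun j _ => zpow_pos (hα j) _
  have hl2 : 0 < lam₂ := by
    rw [hlam₂]; exact Finset.prod_pos fun j _ => zpow_pos (hα j) _
  -- choose the index j
  have hjex : ∃ j : Fin s, ρ * ((δ j : ℝ) - (β j : ℝ)) + (β j : ℝ) ≠ 0 := by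
    by_contra hcon
    push_neg at hcon
    have hβδ : ∀ j, β j = 0 ∧ δ j = 0 := by
      intro j
      have hj0 := hcon j
      by_cases hd : (δ j : ℝ) = (β j : ℝ)
      · have hb : (β j : ℝ) = 0 := by rw [hd] at hj0; simpa using hj0
        have hb' : β j = 0 := by exact_mod_cast hb
        have hd' : δ j = β j := by exact_mod_cast hd
        exact ⟨hb', by rw [hd', hb']⟩
      · exfalso
        have hne : (β j : ℝ) - (δ j : ℝ) ≠ 0 := sub_ne_zero.2 (fun hh => hd hh.symm)
        have hq : ρ = (((β j : ℚ) / ((β j : ℚ) - (δ j : ℚ))) : ℚ) := by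
          push_cast
          field_simp
          linarith
        exact (Rat.not_irrational _) (hq ▸ hρ)
    apply hnontriv
    have hb0 : lam₁ = 1 := by
      rw [hlam₁]
      apply Finset.prod_eq_one
      intro j _
      rw [(hβδ j).1, zpow_zero]
    have hd0 : lam₂ = 1 := by
      rw [hlam₂]
      apply Finset.prod_eq_one
      intro j _
      rw [(hβδ j).2, zpow_zero]
    rw [hb0, hd0]
  obtain ⟨j, hj⟩ := hjex
  have h0m : (0:ℝ) ∈ Set.Ico (0:ℝ) 1 := ⟨le_refl 0, one_pos⟩
  have ham : a ∈ Set.Ico (0:ℝ) 1 := ⟨ha.1.le, ha.2⟩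
  -- the orbit of 0
  have horb : ∀ n, B^[n] 0 ∈ Set.Ico (0:ℝ) 1 := by
    intro n
    induction n with
    | zero => exact h0m
    | succ n ih => rw [Function.iterate_succ_apply']; exact hB.bijOn.mapsTo ih
  -- numbers of visits and slope products
  set N : ℕ → ℕ := fun n => ((Finset.range n).filter (fun k => a ≤ B^[k] 0)).card with hN
  set P : ℕ → ℝ := fun n => ∏ k ∈ Finset.range n, (if a ≤ B^[k] 0 then lam₂ else lam₁) with hP
  have hPpos : ∀ n, 0 < P n := by
    intro n
    apply Finset.prod_pos
    intro k _
    split <;> assumption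
  -- local affineness of B
  have loc : ∀ z ∈ Set.Ico (0:ℝ) 1, ∃ lam c u, z < u ∧
      ∀ y ∈ Set.Ico z u, B y = lam * y + c := by
    obtain ⟨p, aa, hp0, ha0, hap, hainc, hpiece⟩ := hB.piecewise
    intro z hz
    obtain ⟨i, hip, hi1, hi2⟩ := find_idx p aa z (ha0 ▸ hz.1) (hap ▸ hz.2)
    obtain ⟨lam, c, hlam, haff⟩ := hpiece i hip
    exact ⟨lam, c, aa (i+1), hi2, fun y hy => haff y ⟨le_trans hi1 hy.1, hy.2⟩⟩
  have slope_eq : ∀ z ∈ Set.Ico (0:ℝ) 1, ∀ lam c u, z < u →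
      (∀ y ∈ Set.Ico z u, B y = lam * y + c) →
      lam = (if a ≤ z then lam₂ else lam₁) := by
    intro z hz lam c u hu haff
    have hr := rightD_of_affine hu haff
    by_cases hza : a ≤ z
    · rw [if_pos hza, ← hr, hs2 z ⟨hza, hz.2⟩]
    · rw [if_neg hza, ← hr, hs1 z ⟨hz.1, lt_of_not_ge hza⟩]
  -- B^[n] is affine with slope P n on a right neighborhood of 0
  have main : ∀ n, ∃ u c, 0 < u ∧ ∀ y ∈ Set.Ico (0:ℝ) u, B^[n] y = P n * y + c := by
    intro n
    induction n with
    | zero => exact ⟨1, 0, one_pos, fun y _ => by simp [hP]⟩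
    | succ n ih =>
      obtain ⟨u, c, hu, haff⟩ := ih
      have hz := horb n
      have hc : B^[n] 0 = c := by
        have := haff 0 ⟨le_refl 0, hu⟩; simpa using this
      obtain ⟨lam, c', u', hu', haff'⟩ := loc _ hz
      have hlam : lam = if a ≤ B^[n] 0 then lam₂ else lam₁ :=
        slope_eq _ hz lam c' u' hu' haff'
      have hPn := hPpos n
      have hcu' : c < u' := hc ▸ hu'
      refine ⟨min u ((u' - c) / P n), lam * c + c', lt_min hu (div_pos (by linarith) hPn),
        fun y hy => ?_⟩
      have h1 : B^[n] y = P n * y + c := haff y ⟨hy.1, lt_of_lt_of_le hy.2 (min_le_left _ _)⟩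
      have hy2 : y < (u' - c) / P n := lt_of_lt_of_le hy.2 (min_le_right _ _)
      have hmem : P n * y + c ∈ Set.Ico (B^[n] 0) u' := by
        rw [hc]
        constructor
        · nlinarith [hy.1]
        · have := (lt_div_iff₀ hPn).1 hy2
          nlinarith
      rw [Function.iterate_succ_apply', h1, haff' _ hmem, hP]
      simp only [Finset.prod_range_succ]
      rw [← hlam]
      ring
  have hD : ∀ n, rightD (B^[n]) 0 = P n := by
    intro n
    obtain ⟨u, c, hu, haff⟩ := main n
    exact rightD_of_affine hu haff
  have hNle : ∀ n, N n ≤ n := fun n =>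
    le_trans (Finset.card_filter_le _ _) (le_of_eq (Finset.card_range n))
  have hPsplit : ∀ n, P n = lam₂ ^ (N n) * lam₁ ^ (n - N n) := by
    intro n
    simp only [hP]
    rw [Finset.prod_ite, Finset.prod_const, Finset.prod_const]
    congr 2
    have h1 := Finset.card_filter_add_card_filter_not
      (s := Finset.range n) (p := fun k => a ≤ B^[k] 0)
    rw [Finset.card_range] at h1
    have h2 : (Finset.filter (fun k => a ≤ B^[k] 0) (Finset.range n)).card = N n := rfl
    omega
  -- the exponents
  set e : ℕ → Fin s → ℤ := fun n k => β k * ((n : ℤ) - N n) + δ k * (N n) with he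
  have hprod : ∀ n, ∏ k, α k ^ e n k = lam₂ ^ (N n) * lam₁ ^ (n - N n) := by
    intro n
    have hcast : ((n:ℤ) - N n) = ((n - N n : ℕ) : ℤ) := by
      have := hNle n; omega
    calc ∏ k, α k ^ e n k
        = ∏ k, (α k ^ β k) ^ (n - N n) * (α k ^ δ k) ^ (N n) := by
          apply Finset.prod_congr rfl
          intro k _
          rw [he]
          rw [zpow_add₀ (ne_of_gt (hα k)), hcast, zpow_mul, zpow_mul,
            zpow_natCast, zpow_natCast]
      _ = lam₂ ^ (N n) * lam₁ ^ (n - N n) := by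
          rw [Finset.prod_mul_distrib, Finset.prod_pow, Finset.prod_pow, ← hlam₁, ← hlam₂]
          ring
  -- conjugacy computations
  have h00 : h 0 = 0 := by
    obtain ⟨y, hy, hy0⟩ := hbij.surjOn h0m
    rcases eq_or_lt_of_le hy.1 with heq | hlt
    · rwa [← heq] at hy0
    · exfalso
      have := hmono h0m hy hlt
      have h0nn := (hbij.mapsTo h0m).1
      rw [hy0] at this
      linarith
  have hha : h a = 1 - ρ := by
    have h1 := hconj a ham
    rw [hBa, h00] at h1
    have hham := hbij.mapsTo ham
    have hfr : Int.fract (h a + ρ) = 0 := h1.symm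
    have hfl : h a + ρ = (⌊h a + ρ⌋ : ℝ) := by
      have := Int.fract (h a + ρ)
      rw [Int.fract] at hfr
      linarith
    have hb1 : (0:ℝ) < (⌊h a + ρ⌋ : ℝ) := by rw [← hfl]; linarith [hham.1, hρ01.1]
    have hb2 : ((⌊h a + ρ⌋ : ℝ)) < 2 := by rw [← hfl]; linarith [hham.2, hρ01.2]
    have : ⌊h a + ρ⌋ = 1 := by
      have hb1' : 0 < ⌊h a + ρ⌋ := by exact_mod_cast hb1
      have hb2' : ⌊h a + ρ⌋ < 2 := by exact_mod_cast hb2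
      omega
    rw [this] at hfl
    push_cast at hfl
    linarith
  have hhiter : ∀ n : ℕ, h (B^[n] 0) = Int.fract ((n:ℝ) * ρ) := by
    intro n
    induction n with
    | zero => simp [h00]
    | succ n ih =>
      rw [Function.iterate_succ_apply', hconj _ (horb n), ih]
      have hrw : Int.fract ((n:ℝ) * ρ) + ρ = ((n:ℝ) * ρ + ρ) - (⌊(n:ℝ) * ρ⌋ : ℤ) := by
        rw [Int.fract]; push_cast; ring
      rw [hrw, Int.fract_sub_intCast]
      congr 1
      push_cast
      ring
  have hCiff : ∀ n, (a ≤ B^[n] 0) ↔ 1 - ρ ≤ Int.fract ((n:ℝ) * ρ) := by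
    intro n
    rw [← hha, ← hhiter n]
    exact (hmono.le_iff_le ham (horb n)).symm
  have hNfloor : ∀ n, (N n : ℤ) = ⌊(n:ℝ) * ρ⌋ := by
    intro n
    induction n with
    | zero => simp [hN]
    | succ n ih =>
      have hstep : N (n+1) = N n + (if a ≤ B^[n] 0 then 1 else 0) := by
        rw [hN]
        simp only [Finset.range_add_one, Finset.filter_insert]
        split
        · rw [Finset.card_insert_of_notMem (by simp)]
        · simp [hN]
      have hfl : ⌊((n:ℝ) + 1) * ρ⌋ = ⌊(n:ℝ) * ρ⌋ + (if a ≤ B^[n] 0 then 1 else 0) := by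
        have hdec : ((n:ℝ) + 1) * ρ = ((⌊(n:ℝ) * ρ⌋ : ℤ) : ℝ) + (Int.fract ((n:ℝ) * ρ) + ρ) := by
          rw [Int.fract]; push_cast; ring
        rw [hdec, Int.floor_intCast_add]
        congr 1
        by_cases hC : a ≤ B^[n] 0
        · rw [if_pos hC]
          have h1 : 1 - ρ ≤ Int.fract ((n:ℝ) * ρ) := (hCiff n).1 hC
          have h2 : Int.fract ((n:ℝ) * ρ) < 1 := Int.fract_lt_one _
          apply Int.floor_eq_iff.2
          constructor
          · push_cast; linarith
          · push_cast; linarith [hρ01.2]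
        · rw [if_neg hC]
          have h1 : Int.fract ((n:ℝ) * ρ) < 1 - ρ := lt_of_not_ge (fun hh => hC ((hCiff n).2 hh))
          have h0 : 0 ≤ Int.fract ((n:ℝ) * ρ) := Int.fract_nonneg _
          apply Int.floor_eq_iff.2
          constructor
          · push_cast; linarith [hρ01.1]
          · push_cast; linarith
      have hcast : ((n + 1 : ℕ) : ℝ) = (n:ℝ) + 1 := by push_cast; ring
      rw [hcast, hfl, ← ih]
      push_cast [hstep]
      split <;> push_cast <;> ring
  -- the limit
  have hF := floor_tendsto ρ
  have hlim0 : Filter.Tendsto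
      (fun n : ℕ => (β j : ℝ) + ((⌊(n:ℝ) * ρ⌋ : ℝ) / n) * ((δ j : ℝ) - (β j : ℝ)))
      Filter.atTop (nhds ((β j : ℝ) + ρ * ((δ j : ℝ) - (β j : ℝ)))) :=
    tendsto_const_nhds.add (hF.mul_const _)
  have hlim : Filter.Tendsto (fun n : ℕ => (e n j : ℝ) / n) Filter.atTop
      (nhds (ρ * ((δ j : ℝ) - (β j : ℝ)) + (β j : ℝ))) := by
    have : (ρ * ((δ j : ℝ) - (β j : ℝ)) + (β j : ℝ))
        = ((β j : ℝ) + ρ * ((δ j : ℝ) - (β j : ℝ))) := by ring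
    rw [this]
    apply hlim0.congr'
    filter_upwards [Filter.eventually_ge_atTop 1] with n hn
    have hne : (n:ℝ) ≠ 0 := Nat.cast_ne_zero.2 (by omega)
    have hNr : ((N n : ℤ) : ℝ) = (⌊(n:ℝ) * ρ⌋ : ℝ) := by exact_mod_cast congrArg Int.cast (hNfloor n)
    rw [he]
    push_cast
    rw [← hNr]
    push_cast
    field_simp
    ring
  refine ⟨j, 0, h0m, e, fun n => ?_, hlim, hj⟩
  rw [hD n, hPsplit n, ← hprod n]
end
end

section
/- Let I=[a,b) be a half-open interval, α/|I| irrational, and g an interval exchange transformation of I commuting with the restricted rotation R_α of I; if additionally g preserves Lebesgue measure on I, then g is itself a restricted rotation of I. -/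
open Set Filter Function MeasureTheory Topology

noncomputable section

/-- An interval exchange transformation of `I = [a,b)`: a bijection of `I`, the identity
outside `I`, which is piecewise a translation on finitely many half-open intervals. -/
structure IsIETOn (g : ℝ → ℝ) (a b : ℝ) : Prop where
  bijOn : Set.BijOn g (Set.Ico a b) (Set.Ico a b)
  id_outside : ∀ x, x ∉ Set.Ico a b → g x = x
  piecewise : ∃ (p : ℕ) (c : ℕ → ℝ), 0 < p ∧ c 0 = a ∧ c p = b ∧
    (∀ i j, i < j → j ≤ p → c i < c j) ∧
    ∀ i < p, ∃ t : ℝ, ∀ x ∈ Set.Ico (c i) (c (i + 1)), g x = x + t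

/-- One step of the restricted rotation: stays in `[a,b)` and translates by `α` mod `b-a`. -/
lemma RR_step {a b α : ℝ} (hα : 0 < α) (hα' : α < b - a) {x : ℝ} (hx : x ∈ Set.Ico a b) :
    RR a b α x ∈ Set.Ico a b ∧ ∃ k : ℤ, RR a b α x = x + α + k * (b - a) := by
  obtain ⟨h1, h2⟩ := hx
  unfold RR
  by_cases h : x ∈ Set.Ico a (b - α)
  · rw [if_pos h]
    exact ⟨⟨by linarith, by linarith [h.2]⟩, 0, by push_cast; ring⟩
  · have hx2 : x ∈ Set.Ico (b - α) b := by
      constructor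
      · by_contra hlt
        exact h ⟨h1, by linarith [not_le.mp hlt]⟩
      · exact h2
    rw [if_neg h, if_pos hx2]
    exact ⟨⟨by linarith [hx2.1], by linarith⟩, -1, by push_cast; ring⟩

/-- Iterates of the restricted rotation. -/
lemma RR_iter {a b α : ℝ} (hα : 0 < α) (hα' : α < b - a) (n : ℕ) {x : ℝ}
    (hx : x ∈ Set.Ico a b) :
    (RR a b α)^[n] x ∈ Set.Ico a b ∧
      ∃ k : ℤ, (RR a b α)^[n] x = x + n * α + k * (b - a) := by
  induction n with
  | zero => exact ⟨hx, 0, by simp⟩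
  | succ n ih =>
    obtain ⟨hmem, k, hk⟩ := ih
    obtain ⟨hmem', k', hk'⟩ := RR_step hα hα' hmem
    rw [Function.iterate_succ_apply']
    refine ⟨hmem', k + k', ?_⟩
    rw [hk', hk]; push_cast; ring

/-- Two points of `[a,b)` differing by an integer multiple of `b - a` are equal. -/
lemma unique_rep {a b x y : ℝ} (hx : x ∈ Set.Ico a b) (hy : y ∈ Set.Ico a b)
    {k : ℤ} (h : y = x + k * (b - a)) : y = x := by
  obtain ⟨hx1, hx2⟩ := hx
  obtain ⟨hy1, hy2⟩ := hy
  have hk : k = 0 := by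
    rcases lt_trichotomy k 0 with hlt | heq | hgt
    · have hk1 : k ≤ -1 := by omega
      have : (k : ℝ) ≤ -1 := by exact_mod_cast hk1
      nlinarith
    · exact heq
    · have hk1 : (1:ℤ) ≤ k := hgt
      have : (1 : ℝ) ≤ (k : ℝ) := by exact_mod_cast hk1
      nlinarith
  rw [hk] at h; push_cast at h; linarith

/-- The subgroup generated by `α` and `L` is dense when `α / L` is irrational. -/
lemma dense_closure_pair {α L : ℝ} (hL : 0 < L) (hirr : Irrational (α / L)) :
    Dense ((AddSubgroup.closure {α, L} : AddSubgroup ℝ) : Set ℝ) := by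
  rcases AddSubgroup.dense_or_cyclic (AddSubgroup.closure {α, L}) with hd | ⟨c, hc⟩
  · exact hd
  · exfalso
    have hαm : α ∈ AddSubgroup.closure ({α, L} : Set ℝ) :=
      AddSubgroup.subset_closure (by simp)
    have hLm : L ∈ AddSubgroup.closure ({α, L} : Set ℝ) :=
      AddSubgroup.subset_closure (by simp)
    rw [hc, AddSubgroup.mem_closure_singleton] at hαm hLm
    obtain ⟨m, hm⟩ := hαm
    obtain ⟨n, hn⟩ := hLm
    have hc0 : c ≠ 0 := by
      rintro rfl; simp at hn; exact absurd hn.symm (ne_of_gt hL)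
    have hn0 : (n : ℝ) ≠ 0 := by
      rintro hn0; rw [zsmul_eq_mul, hn0, zero_mul] at hn
      exact absurd hn.symm (ne_of_gt hL)
    apply hirr
    refine ⟨(m : ℚ) / (n : ℚ), ?_⟩
    rw [← hm, ← hn, zsmul_eq_mul, zsmul_eq_mul]
    push_cast
    rw [mul_div_mul_right _ _ hc0]

theorem stmt_18 (a b α : ℝ) (hab : a < b) (hα : 0 < α) (hα' : α < b - a)
    (hirr : Irrational (α / (b - a)))
    (g : ℝ → ℝ) (hg : IsIETOn g a b)
    (hcomm : ∀ x, g (RR a b α x) = RR a b α (g x))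
    (hleb : Measure.map g (volume.restrict (Set.Ico a b)) =
      volume.restrict (Set.Ico a b)) :
    ∃ d : ℝ, 0 ≤ d ∧ d < b - a ∧ g = RR a b d := by
  have hL : 0 < b - a := sub_pos.2 hab
  have ha : a ∈ Set.Ico a b := ⟨le_refl a, hab⟩
  have hga : g a ∈ Set.Ico a b := hg.bijOn.mapsTo ha
  set d := g a - a with hd
  have hd0 : 0 ≤ d := by simp only [hd]; linarith [hga.1]
  have hd1 : d < b - a := by simp only [hd]; linarith [hga.2]
  -- commutation with iterates
  have hcommn : ∀ (n : ℕ) (x : ℝ), g ((RR a b α)^[n] x) = (RR a b α)^[n] (g x) := by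
    intro n
    induction n with
    | zero => intro x; simp
    | succ n ih =>
      intro x
      rw [Function.iterate_succ_apply', Function.iterate_succ_apply', hcomm, ih]
  -- invariance along nonnegative-iterate orbit relations
  have key_nat : ∀ (m : ℕ) (nn : ℤ) (x y : ℝ), x ∈ Set.Ico a b → y ∈ Set.Ico a b →
      y = x + m * α + nn * (b - a) → ∃ k : ℤ, g y - y = g x - x + k * (b - a) := by
    intro m nn x y hx hy hxy
    obtain ⟨hmem, k1, hk1⟩ := RR_iter hα hα' m hx
    have hyx : y = (RR a b α)^[m] x + ((nn - k1 : ℤ) : ℝ) * (b - a) := by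
      rw [hk1, hxy]; push_cast; ring
    have hy_eq : y = (RR a b α)^[m] x := unique_rep hmem hy hyx
    have hgx : g x ∈ Set.Ico a b := hg.bijOn.mapsTo hx
    obtain ⟨hmem2, k2, hk2⟩ := RR_iter hα hα' m hgx
    refine ⟨k2 - k1, ?_⟩
    rw [hy_eq, hcommn m x, hk2, hk1]
    push_cast; ring
  -- invariance for arbitrary integer combinations
  have key : ∀ (m nn : ℤ) (x y : ℝ), x ∈ Set.Ico a b → y ∈ Set.Ico a b →
      y = x + m * α + nn * (b - a) → ∃ k : ℤ, g y - y = g x - x + k * (b - a) := by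
    intro m nn x y hx hy hxy
    rcases le_or_gt 0 m with hm | hm
    · obtain ⟨m', rfl⟩ := Int.eq_ofNat_of_zero_le hm
      exact key_nat m' nn x y hx hy (by rw [hxy]; push_cast; ring)
    · have hm' : 0 ≤ -m := by omega
      obtain ⟨m', hm'eq⟩ := Int.eq_ofNat_of_zero_le hm'
      have hxy' : x = y + ((m' : ℕ) : ℝ) * α + ((-nn : ℤ) : ℝ) * (b - a) := by
        have hm'' : ((m' : ℕ) : ℝ) = -(m : ℝ) := by exact_mod_cast hm'eq.symm
        rw [hm'', hxy]; push_cast; ring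
      obtain ⟨k, hk⟩ := key_nat m' (-nn) y x hy hx hxy'
      exact ⟨-k, by push_cast; linarith⟩
  -- the piecewise structure of g
  obtain ⟨p, c, hp, hc0, hcp, hmono, hpw⟩ := hg.piecewise
  have hca : ∀ i, i ≤ p → a ≤ c i := by
    intro i hi
    rcases Nat.eq_zero_or_pos i with rfl | hi0
    · simp [hc0]
    · have h := hmono 0 i hi0 hi; rw [hc0] at h; exact le_of_lt h
  have hcb : ∀ i, i ≤ p → c i ≤ b := by
    intro i hi
    rcases eq_or_lt_of_le hi with rfl | hi'
    · simp [hcp]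
    · have h := hmono i p hi' (le_refl p); rw [hcp] at h; exact le_of_lt h
  -- main claim: g x - x ≡ d mod L on [a,b)
  have main : ∀ x ∈ Set.Ico a b, ∃ k : ℤ, g x - x = d + k * (b - a) := by
    intro x hx
    -- find the piece containing x
    classical
    have hex : ∃ i, i ≤ p ∧ c i ≤ x := ⟨0, Nat.zero_le p, hc0 ▸ hx.1⟩
    set i := Nat.findGreatest (fun i => c i ≤ x) p with hi
    have hPi : c i ≤ x := by
      exact Nat.findGreatest_spec (P := fun i => c i ≤ x) (Nat.zero_le p)
        (by simpa [hc0] using hx.1)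
    have hip : i ≤ p := Nat.findGreatest_le p
    have hiplt : i < p := by
      rcases eq_or_lt_of_le hip with heq | h; swap; · exact h
      exfalso
      have : c i = b := by rw [heq, hcp]
      linarith [hx.2, this ▸ hPi]
    have hPi1 : x < c (i + 1) := by
      by_contra hcon
      have hgr := Nat.findGreatest_is_greatest (P := fun i => c i ≤ x) (n := p)
        (k := i + 1) (by omega) (by omega)
      exact hgr (not_lt.mp hcon)
    obtain ⟨t, ht⟩ := hpw i hiplt
    -- find an orbit point of a in (c i, c (i+1))
    have hdense := dense_closure_pair hL hirr
    have hne : (Set.Ioo (c i - a) (c (i+1) - a)).Nonempty := by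
      have := hmono i (i+1) (by omega) (by omega)
      exact ⟨(c i - a + (c (i+1) - a)) / 2, Set.mem_Ioo.mpr ⟨by linarith, by linarith⟩⟩
    obtain ⟨s, hsmem, hsIoo⟩ := hdense.exists_mem_open isOpen_Ioo hne
    rw [SetLike.mem_coe, AddSubgroup.mem_closure_pair] at hsmem
    obtain ⟨m, nn, hmn⟩ := hsmem
    set y := a + s with hy
    have hyIoo : y ∈ Set.Ioo (c i) (c (i+1)) := by
      obtain ⟨h1, h2⟩ := hsIoo
      exact ⟨by simp only [hy]; linarith, by simp only [hy]; linarith⟩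
    have hyIco : y ∈ Set.Ico a b :=
      ⟨le_trans (hca i hip) (le_of_lt hyIoo.1),
        lt_of_lt_of_le hyIoo.2 (hcb (i+1) (by omega))⟩
    obtain ⟨k, hk⟩ := key m nn a y ha hyIco
      (by rw [hy, ← hmn, zsmul_eq_mul, zsmul_eq_mul]; ring)
    have hgy : g y = y + t := ht y ⟨le_of_lt hyIoo.1, hyIoo.2⟩
    have hgx : g x = x + t := ht x ⟨hPi, hPi1⟩
    refine ⟨k, ?_⟩
    rw [hgy] at hk
    rw [hgx, hd]
    linarith
  -- conclusion
  refine ⟨d, hd0, by linarith, ?_⟩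
  funext x
  by_cases hx : x ∈ Set.Ico a b
  · obtain ⟨k, hk⟩ := main x hx
    obtain ⟨hgx1, hgx2⟩ := hg.bijOn.mapsTo hx
    obtain ⟨hx1, hx2⟩ := hx
    unfold RR
    rcases lt_or_ge x (b - d) with hlt | hge
    · rw [if_pos (Set.mem_Ico.mpr ⟨hx1, hlt⟩)]
      have hk0 : k = 0 := by
        rcases lt_trichotomy k 0 with h | h | h
        · exfalso
          have hk1' : k ≤ -1 := by omega
          have hk1 : (k : ℝ) ≤ -1 := by exact_mod_cast hk1'
          nlinarith
        · exact h
        · exfalso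
          have hk1 : (1 : ℝ) ≤ (k : ℝ) := by exact_mod_cast h
          nlinarith
      rw [hk0] at hk; push_cast at hk; linarith
    · rw [if_neg (by simp only [Set.mem_Ico]; push_neg; intro _; exact hge),
        if_pos (Set.mem_Ico.mpr ⟨hge, hx2⟩)]
      have hkm1 : k = -1 := by
        rcases lt_trichotomy k (-1) with h | h | h
        · exfalso
          have hk1' : k ≤ -2 := by omega
          have hk1 : (k : ℝ) ≤ -2 := by exact_mod_cast hk1'
          nlinarith
        · exact h
        · exfalso
          have hk1' : (0:ℤ) ≤ k := by omega
          have hk1 : (0 : ℝ) ≤ (k : ℝ) := by exact_mod_cast hk1'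
          nlinarith
      rw [hkm1] at hk; push_cast at hk
      linarith
  · rw [hg.id_outside x hx]
    unfold RR
    rw [if_neg, if_neg]
    · intro h
      exact hx ⟨le_trans (by linarith) h.1, h.2⟩
    · intro h
      exact hx ⟨h.1, lt_of_lt_of_le h.2 (by linarith)⟩
end
end
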